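/- For any graph G, the restriction maps Short(C₁(G;ℤ)) → Short(𝒞(G)) and Short(C₁(G;ℤ)) → Short(ℱ(G)) are surjective, and the inclusion of 𝒞(G) ⊕ ℱ(G) in C₁(G;ℤ) induces an isomorphism φ : (C(𝒞(G)), d_𝒞) → (C(ℱ(G)), −d_ℱ) of torsors with ℚ-valued maps, characterized by φ([r_𝒞(χ)]) = [r_ℱ(χ)] for χ ∈ Char(C₁(G;ℤ)), where r_𝒞 and r_ℱ are the restriction maps. -/

import Mathlib

set_option linter.unusedSectionVars false

open Matrix BigOperators

namespace Greene

/-- A rational number is an integer. -/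
def isInt (q : ℚ) : Prop := ∃ m : ℤ, q = (m : ℚ)

section LatticeDefs

variable {ι : Type} [Fintype ι] [DecidableEq ι]
variable {ι' : Type} [Fintype ι'] [DecidableEq ι']

/-- The bilinear form on `ι → ℚ` with (integral) Gram matrix `B`. -/
def qform (B : Matrix ι ι ℤ) (x y : ι → ℚ) : ℚ :=
  x ⬝ᵥ ((B.map (Int.cast : ℤ → ℚ)) *ᵥ y)

/-- The set of integer vectors: the standard lattice inside `ι → ℚ`. -/
def intVecs (ι : Type) [Fintype ι] [DecidableEq ι] : Set (ι → ℚ) :=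
  {x | ∀ i, isInt (x i)}

lemma qform_zero_left (B : Matrix ι ι ℤ) (y : ι → ℚ) : qform B 0 y = 0 :=
  zero_dotProduct _

lemma qform_add_left (B : Matrix ι ι ℤ) (x x' y : ι → ℚ) :
    qform B (x + x') y = qform B x y + qform B x' y := add_dotProduct _ _ _

lemma qform_neg_left (B : Matrix ι ι ℤ) (x y : ι → ℚ) :
    qform B (-x) y = -qform B x y := neg_dotProduct _ _

/-- The dual lattice `S* = {x ∈ span_ℚ S | ⟨x,y⟩ ∈ ℤ for all y ∈ S}`. -/
def dualOf (B : Matrix ι ι ℤ) (S : Set (ι → ℚ)) : AddSubgroup (ι → ℚ) where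
  carrier := {x | x ∈ Submodule.span ℚ S ∧ ∀ y ∈ S, isInt (qform B x y)}
  zero_mem' := ⟨Submodule.zero_mem _, fun y _ => ⟨0, by simp [qform_zero_left]⟩⟩
  add_mem' := by
    intro a b ha hb
    refine ⟨Submodule.add_mem _ ha.1 hb.1, fun y hy => ?_⟩
    obtain ⟨m, hm⟩ := ha.2 y hy
    obtain ⟨m', hm'⟩ := hb.2 y hy
    exact ⟨m + m', by rw [qform_add_left, hm, hm']; push_cast; ring⟩
  neg_mem' := by
    intro a ha
    refine ⟨Submodule.neg_mem _ ha.1, fun y hy => ?_⟩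
    obtain ⟨m, hm⟩ := ha.2 y hy
    exact ⟨-m, by rw [qform_neg_left, hm]; push_cast; ring⟩

/-- Characteristic covectors: `χ ∈ S*` with `⟨χ,y⟩ ≡ ⟨y,y⟩ (mod 2)` for all `y ∈ S`. -/
def CharOf (B : Matrix ι ι ℤ) (S : Set (ι → ℚ)) : Set (ι → ℚ) :=
  {χ | χ ∈ dualOf B S ∧ ∀ y ∈ S, ∃ m : ℤ, qform B χ y - qform B y y = 2 * (m : ℚ)}

/-- Two covectors are in the same class mod `2S`. -/
def SameClass (S : Set (ι → ℚ)) (χ χ' : ι → ℚ) : Prop :=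
  ∃ y ∈ S, χ' = χ + (2 : ℚ) • y

/-- Short characteristic covectors: minimal norm in their class mod `2S`. -/
def ShortOf (B : Matrix ι ι ℤ) (S : Set (ι → ℚ)) : Set (ι → ℚ) :=
  {χ | χ ∈ CharOf B S ∧ ∀ χ' ∈ CharOf B S, SameClass S χ χ' → qform B χ χ ≤ qform B χ' χ'}

/-- Rank of a lattice: dimension of its rational span. -/
noncomputable def rkOf (S : Set (ι → ℚ)) : ℕ := Module.finrank ℚ (Submodule.span ℚ S)

/-- The lattice `S` sitting inside its dual. -/
def latIn (B : Matrix ι ι ℤ) (S : Set (ι → ℚ)) : AddSubgroup (dualOf B S) :=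
  AddSubgroup.closure {x | (x : ι → ℚ) ∈ S}

/-- The discriminant group `S*/S`. -/
def disc (B : Matrix ι ι ℤ) (S : Set (ι → ℚ)) : Type :=
  dualOf B S ⧸ latIn B S

noncomputable instance (B : Matrix ι ι ℤ) (S : Set (ι → ℚ)) : AddCommGroup (disc B S) :=
  inferInstanceAs (AddCommGroup (dualOf B S ⧸ latIn B S))

/-- The class of a dual vector in the discriminant group. -/
def dmk (B : Matrix ι ι ℤ) (S : Set (ι → ℚ)) {x : ι → ℚ} (hx : x ∈ dualOf B S) :
    disc B S := QuotientAddGroup.mk (⟨x, hx⟩ : dualOf B S)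

/-- `S` is an additive subgroup (a sublattice, when contained in a lattice). -/
def IsLat (S : Set (ι → ℚ)) : Prop :=
  (0 : ι → ℚ) ∈ S ∧ ∀ x ∈ S, ∀ y ∈ S, x - y ∈ S

/-- The form is integer valued on `S`. -/
def IntegralOn (B : Matrix ι ι ℤ) (S : Set (ι → ℚ)) : Prop :=
  ∀ x ∈ S, ∀ y ∈ S, isInt (qform B x y)

/-- Unimodularity: the dual lattice equals the lattice. -/
def UnimodularOn (B : Matrix ι ι ℤ) (S : Set (ι → ℚ)) : Prop :=
  ((dualOf B S : AddSubgroup (ι → ℚ)) : Set (ι → ℚ)) = S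

/-- Positive definiteness of the form on the span of `S`. -/
def PosDefOn (B : Matrix ι ι ℤ) (S : Set (ι → ℚ)) : Prop :=
  ∀ x ∈ Submodule.span ℚ S, x ≠ 0 → 0 < qform B x x

/-- Orthogonality of two sublattices. -/
def OrthogonalSets (B : Matrix ι ι ℤ) (S T : Set (ι → ℚ)) : Prop :=
  ∀ x ∈ S, ∀ y ∈ T, qform B x y = 0

/-- `S, T` are complementary sublattices of `L`: orthogonal with ranks summing to `rk L`. -/
noncomputable def ComplementaryIn (B : Matrix ι ι ℤ) (L S T : Set (ι → ℚ)) : Prop :=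
  OrthogonalSets B S T ∧ rkOf S + rkOf T = rkOf L

/-- `S ⊆ L` is a primitive sublattice: the restriction map `L* → S*` surjects. -/
def PrimitiveIn (B : Matrix ι ι ℤ) (L S : Set (ι → ℚ)) : Prop :=
  ∀ x ∈ dualOf B S, ∃ z ∈ dualOf B L, ∀ u ∈ S, qform B z u = qform B x u

/-- `s` is the signature of the form restricted to the span of `S` (Sylvester form). -/
def IsSignatureOf (B : Matrix ι ι ℤ) (S : Set (ι → ℚ)) (s : ℤ) : Prop :=
  ∃ (p q : ℕ) (v : Fin (p + q) → (ι → ℚ)),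
    (∀ i, v i ∈ Submodule.span ℚ S) ∧
    Submodule.span ℚ (Set.range v) = Submodule.span ℚ S ∧
    LinearIndependent ℚ v ∧
    (∀ i j, i ≠ j → qform B (v i) (v j) = 0) ∧
    (∀ i : Fin (p + q),
      if (i : ℕ) < p then 0 < qform B (v i) (v i) else qform B (v i) (v i) < 0) ∧
    s = (p : ℤ) - (q : ℤ)

/-- `S` admits an orthonormal basis of `n` elements, i.e. `S ≅ ℤⁿ`. -/
def HasOrthonormalBasis (B : Matrix ι ι ℤ) (S : Set (ι → ℚ)) (n : ℕ) : Prop :=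
  ∃ v : Fin n → (ι → ℚ), (∀ i, v i ∈ S) ∧
    (∀ i j, qform B (v i) (v j) = if i = j then 1 else 0) ∧
    (∀ x ∈ S, ∃ c : Fin n → ℤ, x = ∑ i, (c i : ℚ) • v i)

/-- Isomorphism of lattices: an additive bijection preserving the forms. -/
def LatIso (B : Matrix ι ι ℤ) (S : Set (ι → ℚ)) (B' : Matrix ι' ι' ℤ) (S' : Set (ι' → ℚ)) :
    Prop :=
  ∃ f : (ι → ℚ) → (ι' → ℚ), Set.BijOn f S S' ∧
    (∀ x ∈ S, ∀ y ∈ S, f (x + y) = f x + f y) ∧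
    (∀ x ∈ S, ∀ y ∈ S, qform B' (f x) (f y) = qform B x y)

/-- An isomorphism of the torsors `C(S₁) → C(S₂)` (given on representatives by `Φ`),
covering the group isomorphism `ψ` of discriminant groups. -/
def TorsorMapIso (B₁ : Matrix ι ι ℤ) (S₁ : Set (ι → ℚ))
    (B₂ : Matrix ι' ι' ℤ) (S₂ : Set (ι' → ℚ))
    (Φ : (ι → ℚ) → (ι' → ℚ)) (ψ : disc B₁ S₁ ≃+ disc B₂ S₂) : Prop :=
  (∀ χ ∈ CharOf B₁ S₁, Φ χ ∈ CharOf B₂ S₂) ∧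
  (∀ χ ∈ CharOf B₁ S₁, ∀ χ' ∈ CharOf B₁ S₁,
    (SameClass S₁ χ χ' ↔ SameClass S₂ (Φ χ) (Φ χ'))) ∧
  (∀ μ ∈ CharOf B₂ S₂, ∃ χ ∈ CharOf B₁ S₁, SameClass S₂ (Φ χ) μ) ∧
  (∀ χ ∈ CharOf B₁ S₁, ∀ χ' ∈ CharOf B₁ S₁,
    ∀ (x : ι → ℚ) (y : ι' → ℚ) (hx : x ∈ dualOf B₁ S₁) (hy : y ∈ dualOf B₂ S₂),
      χ' = χ + (2 : ℚ) • x → Φ χ' = Φ χ + (2 : ℚ) • y →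
      ψ (dmk B₁ S₁ hx) = dmk B₂ S₂ hy)

/-- Compatibility of `Φ` with the `d`-invariants: `d₂([Φ χ]) = ε · d₁([χ])`,
where `d` is the minimum of `(|χ'|² - rk)/4` over the class. -/
noncomputable def DCompat (B₁ : Matrix ι ι ℤ) (S₁ : Set (ι → ℚ))
    (B₂ : Matrix ι' ι' ℤ) (S₂ : Set (ι' → ℚ))
    (ε : ℚ) (Φ : (ι → ℚ) → (ι' → ℚ)) : Prop :=
  ∀ χ ∈ CharOf B₁ S₁, ∀ q : ℚ,
    IsLeast {t | ∃ χ' ∈ CharOf B₁ S₁, SameClass S₁ χ χ' ∧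
      t = (qform B₁ χ' χ' - (rkOf S₁ : ℚ)) / 4} q →
    IsLeast {t | ∃ μ ∈ CharOf B₂ S₂, SameClass S₂ (Φ χ) μ ∧
      t = (qform B₂ μ μ - (rkOf S₂ : ℚ)) / 4} (ε * q)

/-- Compatibility of `Φ` with the `ρ`-invariants: `ρ₂([Φ χ]) ≡ ε · ρ₁([χ]) (mod 2)`. -/
def RhoCompat (B₁ : Matrix ι ι ℤ) (S₁ : Set (ι → ℚ))
    (B₂ : Matrix ι' ι' ℤ) (S₂ : Set (ι' → ℚ))
    (ε : ℚ) (Φ : (ι → ℚ) → (ι' → ℚ)) : Prop :=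
  ∀ χ ∈ CharOf B₁ S₁, ∀ s₁ s₂ : ℤ, IsSignatureOf B₁ S₁ s₁ → IsSignatureOf B₂ S₂ s₂ →
    ∃ m : ℤ, (qform B₂ (Φ χ) (Φ χ) - (s₂ : ℚ)) / 4 - ε * ((qform B₁ χ χ - (s₁ : ℚ)) / 4)
      = 2 * (m : ℚ)

/-- The `d`-invariants `(C(S₁), d₁)` and `(C(S₂), ε·d₂)` are isomorphic. -/
noncomputable def DIso (B₁ : Matrix ι ι ℤ) (S₁ : Set (ι → ℚ))
    (B₂ : Matrix ι' ι' ℤ) (S₂ : Set (ι' → ℚ)) (ε : ℚ) : Prop :=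
  ∃ (Φ : (ι → ℚ) → (ι' → ℚ)) (ψ : disc B₁ S₁ ≃+ disc B₂ S₂),
    TorsorMapIso B₁ S₁ B₂ S₂ Φ ψ ∧ DCompat B₁ S₁ B₂ S₂ ε Φ

end LatticeDefs

/-- An abstract integral lattice, presented by its Gram matrix. -/
structure IntLattice where
  n : ℕ
  B : Matrix (Fin n) (Fin n) ℤ
  symm : B.IsSymm
  nondeg : B.det ≠ 0

/-- The Gram matrix of the orthogonal direct sum `Λ₁ ⊥ Λ₂`. -/
def glueGram (L₁ L₂ : IntLattice) :
    Matrix (Fin L₁.n ⊕ Fin L₂.n) (Fin L₁.n ⊕ Fin L₂.n) ℤ :=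
  Matrix.fromBlocks L₁.B 0 0 L₂.B

/-- The glue lattice `Λ₁ ⊕_ψ Λ₂ = {x + y ∈ Λ₁* ⊕ Λ₂* : ψ(x̄) = ȳ}`. -/
def glueSet (L₁ L₂ : IntLattice)
    (ψ : disc L₁.B (intVecs (Fin L₁.n)) ≃+ disc L₂.B (intVecs (Fin L₂.n))) :
    Set (Fin L₁.n ⊕ Fin L₂.n → ℚ) :=
  {w | ∃ (h₁ : (w ∘ Sum.inl) ∈ dualOf L₁.B (intVecs (Fin L₁.n)))
        (h₂ : (w ∘ Sum.inr) ∈ dualOf L₂.B (intVecs (Fin L₂.n))),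
        ψ (dmk _ _ h₁) = dmk _ _ h₂}

/-- `Λ₁` embedded in the first factor of `Λ₁* ⊕ Λ₂*`. -/
def inlLat (L₁ L₂ : IntLattice) : Set (Fin L₁.n ⊕ Fin L₂.n → ℚ) :=
  {w | (w ∘ Sum.inl) ∈ intVecs (Fin L₁.n) ∧ w ∘ Sum.inr = 0}

/-- `Λ₂` embedded in the second factor of `Λ₁* ⊕ Λ₂*`. -/
def inrLat (L₁ L₂ : IntLattice) : Set (Fin L₁.n ⊕ Fin L₂.n → ℚ) :=
  {w | (w ∘ Sum.inr) ∈ intVecs (Fin L₂.n) ∧ w ∘ Sum.inl = 0}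

/-- Stabilization `S ⊕ ℤᵏ`. -/
def stabSet {ι : Type} [Fintype ι] [DecidableEq ι] (S : Set (ι → ℚ)) (k : ℕ) :
    Set (ι ⊕ Fin k → ℚ) :=
  {w | (w ∘ Sum.inl) ∈ S ∧ ∀ j, isInt (w (Sum.inr j))}

/-- A finite loopless multigraph, with a reference orientation of each edge. -/
structure MultiGraph where
  nV : ℕ
  nE : ℕ
  hd : Fin nE → Fin nV
  tl : Fin nE → Fin nV
  loopless : ∀ e, hd e ≠ tl e

namespace MultiGraph

/-- The boundary map `C₁(G;ℚ) → C₀(G;ℚ)`, `∂ e = head(e) − tail(e)`. -/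
def bndry (G : MultiGraph) (x : Fin G.nE → ℚ) : Fin G.nV → ℚ :=
  fun v => ∑ e, x e * ((if G.hd e = v then 1 else 0) - (if G.tl e = v then 1 else 0))

/-- The flow lattice `ℱ(G) = ker ∂ ∩ C₁(G;ℤ)`. -/
def flowSet (G : MultiGraph) : Set (Fin G.nE → ℚ) :=
  {x | (∀ e, isInt (x e)) ∧ G.bndry x = 0}

/-- The cut lattice `𝒞(G) = im ∂* ∩ C₁(G;ℤ)`. -/
def cutSet (G : MultiGraph) : Set (Fin G.nE → ℚ) :=
  {x | (∀ e, isInt (x e)) ∧ ∃ g : Fin G.nV → ℚ, ∀ e, x e = g (G.hd e) - g (G.tl e)}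

/-- Reachability using only edges from the set `A`. -/
def ReachIn (G : MultiGraph) (A : Set (Fin G.nE)) : Fin G.nV → Fin G.nV → Prop :=
  Relation.ReflTransGen
    (fun u v => ∃ e ∈ A, (G.hd e = u ∧ G.tl e = v) ∨ (G.hd e = v ∧ G.tl e = u))

def Connected (G : MultiGraph) : Prop := ∀ u v, G.ReachIn Set.univ u v

/-- 2-edge-connectedness: connected, and removing any one edge leaves it connected. -/
def TwoEdgeConnected (G : MultiGraph) : Prop :=
  G.Connected ∧ ∀ e : Fin G.nE, ∀ u v, G.ReachIn {e}ᶜ u v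

/-- `C` is the edge set of a cycle of `G`. -/
def IsCycleEdgeSet (G : MultiGraph) (C : Set (Fin G.nE)) : Prop :=
  ∃ k : ℕ, 0 < k ∧ ∃ (e : Fin k → Fin G.nE) (v : Fin k → Fin G.nV),
    Function.Injective e ∧ Function.Injective v ∧ C = Set.range e ∧
    ∀ i, (G.hd (e i) = v (finRotate k i) ∧ G.tl (e i) = v i) ∨
         (G.tl (e i) = v (finRotate k i) ∧ G.hd (e i) = v i)

/-- A maximal spanning forest: acyclic and realizing all of `G`'s reachability. -/
def IsMaxForest (G : MultiGraph) (F : Finset (Fin G.nE)) : Prop :=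
  (∀ C, G.IsCycleEdgeSet C → ¬(C ⊆ (↑F : Set (Fin G.nE)))) ∧
  ∀ u v, G.ReachIn Set.univ u v → G.ReachIn (↑F) u v

open Classical in
/-- The fundamental cut vector of `e ∈ F`:
`+1` on edges leaving the component `K₁` of the tail of `e` in `F − e`,
`−1` on edges entering it, `0` otherwise. -/
noncomputable def cutVec (G : MultiGraph) (F : Finset (Fin G.nE)) (e : Fin G.nE) :
    Fin G.nE → ℚ := fun j =>
  (if G.ReachIn (↑(F.erase e)) (G.tl j) (G.tl e) then 1 else 0)
    - (if G.ReachIn (↑(F.erase e)) (G.hd j) (G.tl e) then 1 else 0)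

/-- `x` is the fundamental cycle vector of `e ∉ F`: the unique flow supported on
`F ∪ {e}` whose coefficient on `e` is `+1`. -/
def IsFundCycleVec (G : MultiGraph) (F : Finset (Fin G.nE)) (e : Fin G.nE)
    (x : Fin G.nE → ℚ) : Prop :=
  G.bndry x = 0 ∧ (∀ j, j ∉ F → j ≠ e → x j = 0) ∧ x e = 1

/-- Reorienting the edges of `G`: `o e = true` keeps the reference direction. -/
def reorient (G : MultiGraph) (o : Fin G.nE → Bool) : MultiGraph :=
  { G with
    hd := fun e => if o e then G.hd e else G.tl e
    tl := fun e => if o e then G.tl e else G.hd e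
    loopless := by
      intro e
      by_cases h : o e = true
      · simpa [h] using G.loopless e
      · simpa [h] using (G.loopless e).symm }

end MultiGraph

/-- A 2-isomorphism: a bijection of edge sets preserving edge sets of cycles. -/
def TwoIsomorphic (G G' : MultiGraph) : Prop :=
  ∃ σ : Fin G.nE ≃ Fin G'.nE, ∀ C, G.IsCycleEdgeSet C ↔ G'.IsCycleEdgeSet (σ '' C)

/-! ### Auxiliary development for stmt_19 -/

section Aux

open Matrix

lemma isInt_zero : isInt 0 := ⟨0, by norm_num⟩

lemma isInt_one : isInt 1 := ⟨1, by norm_num⟩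

lemma isInt_add' {a b : ℚ} (ha : isInt a) (hb : isInt b) : isInt (a + b) := by
  obtain ⟨m, rfl⟩ := ha; obtain ⟨k, rfl⟩ := hb; exact ⟨m + k, by push_cast; ring⟩

lemma isInt_neg' {a : ℚ} (ha : isInt a) : isInt (-a) := by
  obtain ⟨m, rfl⟩ := ha; exact ⟨-m, by push_cast; ring⟩

lemma isInt_sub' {a b : ℚ} (ha : isInt a) (hb : isInt b) : isInt (a - b) := by
  obtain ⟨m, rfl⟩ := ha; obtain ⟨k, rfl⟩ := hb; exact ⟨m - k, by push_cast; ring⟩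

lemma isInt_mul' {a b : ℚ} (ha : isInt a) (hb : isInt b) : isInt (a * b) := by
  obtain ⟨m, rfl⟩ := ha; obtain ⟨k, rfl⟩ := hb; exact ⟨m * k, by push_cast; ring⟩

lemma isInt_sum' {α : Type*} (s : Finset α) (f : α → ℚ) (h : ∀ i ∈ s, isInt (f i)) :
    isInt (∑ i ∈ s, f i) := by
  classical
  induction s using Finset.cons_induction with
  | empty => simpa using isInt_zero
  | cons a s ha ih =>
      rw [Finset.sum_cons]
      exact isInt_add' (h a (Finset.mem_cons_self a s))
        (ih fun i hi => h i (Finset.mem_cons_of_mem hi))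

/-- evenness of a rational -/
def evenQ (q : ℚ) : Prop := ∃ m : ℤ, q = 2 * m

lemma evenQ_zero : evenQ 0 := ⟨0, by norm_num⟩

lemma evenQ_add {a b : ℚ} (ha : evenQ a) (hb : evenQ b) : evenQ (a + b) := by
  obtain ⟨m, rfl⟩ := ha; obtain ⟨k, rfl⟩ := hb; exact ⟨m + k, by push_cast; ring⟩

lemma evenQ_neg {a : ℚ} (ha : evenQ a) : evenQ (-a) := by
  obtain ⟨m, rfl⟩ := ha; exact ⟨-m, by push_cast; ring⟩

lemma evenQ_sub {a b : ℚ} (ha : evenQ a) (hb : evenQ b) : evenQ (a - b) := by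
  obtain ⟨m, rfl⟩ := ha; obtain ⟨k, rfl⟩ := hb; exact ⟨m - k, by push_cast; ring⟩

lemma evenQ_sum {α : Type*} (s : Finset α) (f : α → ℚ) (h : ∀ i ∈ s, evenQ (f i)) :
    evenQ (∑ i ∈ s, f i) := by
  classical
  induction s using Finset.cons_induction with
  | empty => simpa using evenQ_zero
  | cons a s ha ih =>
      rw [Finset.sum_cons]
      exact evenQ_add (h a (Finset.mem_cons_self a s))
        (ih fun i hi => h i (Finset.mem_cons_of_mem hi))

section QformOne

variable {ι : Type} [Fintype ι] [DecidableEq ι]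

lemma qform_one (x y : ι → ℚ) : qform (1 : Matrix ι ι ℤ) x y = x ⬝ᵥ y := by
  unfold qform
  rw [Matrix.map_one _ Int.cast_zero Int.cast_one, Matrix.one_mulVec]

lemma dot_self_nonneg (x : ι → ℚ) : 0 ≤ x ⬝ᵥ x :=
  Finset.sum_nonneg fun i _ => mul_self_nonneg (x i)

lemma dot_self_pos {x : ι → ℚ} (h : x ≠ 0) : 0 < x ⬝ᵥ x := by
  obtain ⟨i, hi⟩ : ∃ i, x i ≠ 0 := by
    by_contra hc; push_neg at hc; exact h (funext hc)
  calc (0:ℚ) < x i * x i := mul_self_pos.2 hi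
  _ ≤ ∑ j, x j * x j :=
      Finset.single_le_sum (fun j _ => mul_self_nonneg (x j)) (Finset.mem_univ i)

lemma dot_self_eq_zero {x : ι → ℚ} (h : x ⬝ᵥ x = 0) : x = 0 := by
  by_contra hx; exact absurd h (dot_self_pos hx).ne'

lemma exists_nat_scale_int (x : ι → ℚ) : ∃ N : ℕ, 0 < N ∧ ∀ i, isInt ((N : ℚ) * x i) := by
  refine ⟨∏ i, (x i).den, Finset.prod_pos fun i _ => (x i).pos, fun i => ?_⟩
  obtain ⟨k, hk⟩ := Finset.dvd_prod_of_mem (fun i => (x i).den) (Finset.mem_univ i)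
  refine ⟨k * (x i).num, ?_⟩
  have hden : ((x i).den : ℚ) * x i = (x i).num := by
    have h : ((x i).den : ℚ) ≠ 0 := by exact_mod_cast (x i).den_ne_zero
    have h2 : ((x i).num : ℚ) / (x i).den = x i := Rat.num_div_den (x i)
    nth_rewrite 2 [← h2]
    rw [mul_div_cancel₀ _ h]
  push_cast [hk]
  rw [mul_comm ((x i).den : ℚ) (k : ℚ), mul_assoc, hden]

end QformOne

namespace MultiGraph

variable (G : MultiGraph)

/-- The incidence matrix over ℚ. -/
def Dmat : Matrix (Fin G.nV) (Fin G.nE) ℚ :=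
  fun v e => (if G.hd e = v then 1 else 0) - (if G.tl e = v then 1 else 0)

lemma bndry_eq_mulVec (x : Fin G.nE → ℚ) : G.bndry x = G.Dmat *ᵥ x := by
  funext v
  simp only [bndry, Dmat, Matrix.mulVec, dotProduct]
  exact Finset.sum_congr rfl fun e _ => by ring

/-- Rational flow space. -/
def Kf : Submodule ℚ (Fin G.nE → ℚ) := LinearMap.ker G.Dmat.mulVecLin

/-- Rational cut space. -/
def Kc : Submodule ℚ (Fin G.nE → ℚ) := LinearMap.range G.Dmatᵀ.mulVecLin

lemma mem_Kf {x : Fin G.nE → ℚ} : x ∈ G.Kf ↔ G.bndry x = 0 := by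
  rw [Kf, LinearMap.mem_ker, Matrix.mulVecLin_apply, bndry_eq_mulVec]

lemma Dmat_transpose_mulVec (g : Fin G.nV → ℚ) (e : Fin G.nE) :
    (G.Dmatᵀ *ᵥ g) e = g (G.hd e) - g (G.tl e) := by
  simp only [Matrix.mulVec, dotProduct, Matrix.transpose_apply, Dmat, sub_mul, ite_mul,
    one_mul, zero_mul]
  rw [Finset.sum_sub_distrib]
  congr 1 <;> simp [Finset.sum_ite_eq]

lemma mem_Kc {x : Fin G.nE → ℚ} :
    x ∈ G.Kc ↔ ∃ g : Fin G.nV → ℚ, ∀ e, x e = g (G.hd e) - g (G.tl e) := by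
  constructor
  · rintro ⟨g, rfl⟩
    refine ⟨g, fun e => ?_⟩
    rw [show G.Dmatᵀ.mulVecLin g = G.Dmatᵀ *ᵥ g from rfl, G.Dmat_transpose_mulVec]
  · rintro ⟨g, hg⟩
    refine ⟨g, ?_⟩
    rw [show G.Dmatᵀ.mulVecLin g = G.Dmatᵀ *ᵥ g from rfl]
    funext e
    rw [G.Dmat_transpose_mulVec g e, hg e]

lemma mem_flowSet_iff {x : Fin G.nE → ℚ} :
    x ∈ G.flowSet ↔ (∀ e, isInt (x e)) ∧ x ∈ G.Kf := by
  rw [flowSet, Set.mem_setOf_eq, G.mem_Kf]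

lemma mem_cutSet_iff {x : Fin G.nE → ℚ} :
    x ∈ G.cutSet ↔ (∀ e, isInt (x e)) ∧ x ∈ G.Kc := by
  rw [cutSet, Set.mem_setOf_eq, G.mem_Kc]

lemma cut_flow_orth {x y : Fin G.nE → ℚ} (hx : x ∈ G.Kc) (hy : y ∈ G.Kf) :
    x ⬝ᵥ y = 0 := by
  obtain ⟨g, rfl⟩ := hx
  have hy' : G.Dmat *ᵥ y = 0 := hy
  rw [show G.Dmatᵀ.mulVecLin g = G.Dmatᵀ *ᵥ g from rfl, Matrix.mulVec_transpose,
    ← Matrix.dotProduct_mulVec, hy', dotProduct_zero]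

lemma span_flowSet : Submodule.span ℚ G.flowSet = G.Kf := by
  apply le_antisymm
  · rw [Submodule.span_le]
    intro x hx
    exact (G.mem_flowSet_iff.1 hx).2
  · intro x hx
    obtain ⟨N, hN, hint⟩ := exists_nat_scale_int x
    have hNQ : (N : ℚ) ≠ 0 := by positivity
    have hmem : (N : ℚ) • x ∈ G.flowSet := by
      rw [G.mem_flowSet_iff]
      exact ⟨fun e => by simpa using hint e, Submodule.smul_mem _ _ hx⟩
    have hx' : x = (N : ℚ)⁻¹ • ((N : ℚ) • x) := by
      rw [smul_smul, inv_mul_cancel₀ hNQ, one_smul]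
    rw [hx']
    exact Submodule.smul_mem _ _ (Submodule.subset_span hmem)

lemma span_cutSet : Submodule.span ℚ G.cutSet = G.Kc := by
  apply le_antisymm
  · rw [Submodule.span_le]
    intro x hx
    exact (G.mem_cutSet_iff.1 hx).2
  · intro x hx
    obtain ⟨g, hg⟩ := G.mem_Kc.1 hx
    obtain ⟨N, hN, hint⟩ := exists_nat_scale_int g
    have hNQ : (N : ℚ) ≠ 0 := by positivity
    have hmem : (N : ℚ) • x ∈ G.cutSet := by
      rw [G.mem_cutSet_iff]
      constructor
      · intro e
        have : (N : ℚ) • x e = (N:ℚ) * g (G.hd e) - (N:ℚ) * g (G.tl e) := by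
          simp [hg e]; ring
        rw [Pi.smul_apply, smul_eq_mul, hg e, mul_sub]
        exact isInt_sub' (hint _) (hint _)
      · exact G.mem_Kc.2 ⟨fun v => (N:ℚ) * g v, fun e => by
          rw [Pi.smul_apply, smul_eq_mul, hg e]; ring⟩
    have hx' : x = (N : ℚ)⁻¹ • ((N : ℚ) • x) := by
      rw [smul_smul, inv_mul_cancel₀ hNQ, one_smul]
    rw [hx']
    exact Submodule.smul_mem _ _ (Submodule.subset_span hmem)

lemma Kc_sup_Kf : G.Kc ⊔ G.Kf = ⊤ := by
  have hrank : G.Dmatᵀ.rank = G.Dmat.rank := Matrix.rank_transpose _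
  have h1 : Module.finrank ℚ G.Kc = G.Dmat.rank := hrank
  have h2 : G.Dmat.rank + Module.finrank ℚ G.Kf = G.nE := by
    have := LinearMap.finrank_range_add_finrank_ker G.Dmat.mulVecLin
    rwa [Module.finrank_pi, Fintype.card_fin] at this
  have hinf : G.Kc ⊓ G.Kf = ⊥ := by
    rw [eq_bot_iff]
    rintro x ⟨hxc, hxf⟩
    have : x ⬝ᵥ x = 0 := G.cut_flow_orth hxc hxf
    simp [dot_self_eq_zero this]
  apply Submodule.eq_top_of_finrank_eq
  have := Submodule.finrank_sup_add_finrank_inf_eq G.Kc G.Kf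
  rw [hinf] at this
  simp only [finrank_bot, add_zero] at this
  rw [this, h1, Module.finrank_pi, Fintype.card_fin]
  omega

lemma Kc_decomp (x : Fin G.nE → ℚ) : ∃ c ∈ G.Kc, ∃ f ∈ G.Kf, x = c + f := by
  have hx : x ∈ G.Kc ⊔ G.Kf := by rw [G.Kc_sup_Kf]; trivial
  obtain ⟨c, hc, f, hf, h⟩ := Submodule.mem_sup.1 hx
  exact ⟨c, hc, f, hf, h.symm⟩

lemma dot_cut_ext {w : Fin G.nE → ℚ} (h : ∀ c ∈ G.cutSet, w ⬝ᵥ c = 0) :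
    ∀ c ∈ G.Kc, w ⬝ᵥ c = 0 := by
  intro c hc
  rw [← G.span_cutSet] at hc
  induction hc using Submodule.span_induction with
  | mem y hy => exact h y hy
  | zero => simp
  | add y z _ _ hy hz => rw [dotProduct_add, hy, hz, add_zero]
  | smul a y _ hy => rw [dotProduct_smul, hy, smul_zero]

lemma dot_flow_ext {w : Fin G.nE → ℚ} (h : ∀ f ∈ G.flowSet, w ⬝ᵥ f = 0) :
    ∀ f ∈ G.Kf, w ⬝ᵥ f = 0 := by
  intro f hf
  rw [← G.span_flowSet] at hf
  induction hf using Submodule.span_induction with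
  | mem y hy => exact h y hy
  | zero => simp
  | add y z _ _ hy hz => rw [dotProduct_add, hy, hz, add_zero]
  | smul a y _ hy => rw [dotProduct_smul, hy, smul_zero]

lemma mem_Kf_of_orth_cut {w : Fin G.nE → ℚ} (h : ∀ c ∈ G.cutSet, w ⬝ᵥ c = 0) :
    w ∈ G.Kf := by
  obtain ⟨c, hc, f, hf, rfl⟩ := G.Kc_decomp w
  have h1 : (c + f) ⬝ᵥ c = 0 := G.dot_cut_ext h c hc
  have h2 : f ⬝ᵥ c = 0 := by
    rw [dotProduct_comm]; exact G.cut_flow_orth hc hf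
  rw [add_dotProduct, h2, add_zero] at h1
  rw [dot_self_eq_zero h1, zero_add]
  exact hf

lemma mem_Kc_of_orth_flow {w : Fin G.nE → ℚ} (h : ∀ f ∈ G.flowSet, w ⬝ᵥ f = 0) :
    w ∈ G.Kc := by
  obtain ⟨c, hc, f, hf, rfl⟩ := G.Kc_decomp w
  have h1 : (c + f) ⬝ᵥ f = 0 := G.dot_flow_ext h f hf
  have h2 : c ⬝ᵥ f = 0 := G.cut_flow_orth hc hf
  rw [add_dotProduct, h2, zero_add] at h1
  rw [dot_self_eq_zero h1, add_zero]
  exact hc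

lemma dot_sum_right {α : Type*} (s : Finset α) (x : Fin k → ℚ) (w : α → (Fin k → ℚ)) :
    x ⬝ᵥ (∑ e ∈ s, w e) = ∑ e ∈ s, x ⬝ᵥ w e := by
  classical
  induction s using Finset.cons_induction with
  | empty => simp
  | cons a s ha ih => rw [Finset.sum_cons, Finset.sum_cons, dotProduct_add, ih]

lemma isInt_ite01 (p : Prop) [Decidable p] : isInt (if p then (1:ℚ) else 0) := by
  split
  · exact isInt_one
  · exact isInt_zero

lemma reachIn_symm {A : Set (Fin G.nE)} {u v : Fin G.nV} (h : G.ReachIn A u v) :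
    G.ReachIn A v u := by
  refine @Std.Symm.symm _ _ (@Relation.ReflTransGen.stdSymm _ _ ⟨?_⟩) _ _ h
  rintro a b ⟨e, he, hor⟩
  exact ⟨e, he, hor.symm⟩

lemma reachIn_step {A : Set (Fin G.nE)} {e : Fin G.nE} (he : e ∈ A) :
    G.ReachIn A (G.hd e) (G.tl e) :=
  Relation.ReflTransGen.single ⟨e, he, Or.inl ⟨rfl, rfl⟩⟩

lemma exists_goodForest : ∃ F : Finset (Fin G.nE),
    (∀ u v, G.ReachIn Set.univ u v → G.ReachIn (↑F) u v) ∧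
    ∀ e ∈ F, ¬ G.ReachIn (↑(F.erase e)) (G.hd e) (G.tl e) := by
  classical
  have hex : ∃ n : ℕ, ∃ F : Finset (Fin G.nE),
      F.card = n ∧ ∀ u v, G.ReachIn Set.univ u v → G.ReachIn (↑F) u v :=
    ⟨Finset.univ.card, Finset.univ, rfl, fun u v h => by
      simpa [Finset.coe_univ] using h⟩
  obtain ⟨F, hcard, hPF⟩ := Nat.find_spec hex
  refine ⟨F, hPF, ?_⟩
  intro e he hreach
  have herase : ∀ u v, G.ReachIn (↑F) u v → G.ReachIn (↑(F.erase e)) u v := by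
    intro u v h
    induction h with
    | refl => exact Relation.ReflTransGen.refl
    | tail hab step ih =>
        obtain ⟨j, hj, hor⟩ := step
        by_cases hje : j = e
        · subst hje
          rcases hor with ⟨h1, h2⟩ | ⟨h1, h2⟩
          · exact ih.trans (h1 ▸ h2 ▸ hreach)
          · exact ih.trans (h1 ▸ h2 ▸ (G.reachIn_symm hreach))
        · exact ih.tail ⟨j, Finset.mem_coe.2 (Finset.mem_erase.2 ⟨hje, hj⟩), hor⟩
  have hP' : ∀ u v, G.ReachIn Set.univ u v → G.ReachIn (↑(F.erase e)) u v :=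
    fun u v h => herase u v (hPF u v h)
  have hpos : 0 < F.card := Finset.card_pos.2 ⟨e, he⟩
  have hlt : (F.erase e).card < Nat.find hex := by
    rw [Finset.card_erase_of_mem he]
    omega
  exact Nat.find_min hex hlt ⟨F.erase e, rfl, hP'⟩

lemma cutVec_mem_cutSet (F : Finset (Fin G.nE)) (e : Fin G.nE) :
    G.cutVec F e ∈ G.cutSet := by
  classical
  rw [G.mem_cutSet_iff]
  constructor
  · intro j
    unfold cutVec
    exact isInt_sub' (isInt_ite01 _) (isInt_ite01 _)
  · rw [G.mem_Kc]
    refine ⟨fun v => -(if G.ReachIn (↑(F.erase e)) v (G.tl e) then (1:ℚ) else 0),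
      fun j => ?_⟩
    unfold cutVec
    ring

lemma cutVec_delta {F : Finset (Fin G.nE)}
    (hgood : ∀ e ∈ F, ¬ G.ReachIn (↑(F.erase e)) (G.hd e) (G.tl e))
    {e : Fin G.nE} (he : e ∈ F) {j : Fin G.nE} (hj : j ∈ F) :
    G.cutVec F e j = if j = e then 1 else 0 := by
  classical
  unfold cutVec
  by_cases hje : j = e
  · subst hje
    have h1 : G.ReachIn (↑(F.erase j)) (G.tl j) (G.tl j) := Relation.ReflTransGen.refl
    rw [if_pos h1, if_neg (hgood j he), if_pos rfl]
    norm_num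
  · have hmem : j ∈ F.erase e := Finset.mem_erase.2 ⟨hje, hj⟩
    have hiff : G.ReachIn (↑(F.erase e)) (G.tl j) (G.tl e) ↔
        G.ReachIn (↑(F.erase e)) (G.hd j) (G.tl e) := by
      constructor
      · intro h
        exact (G.reachIn_step (Finset.mem_coe.2 hmem)).trans h
      · intro h
        exact (G.reachIn_symm (G.reachIn_step (Finset.mem_coe.2 hmem))).trans h
    rw [if_neg hje]
    by_cases h1 : G.ReachIn (↑(F.erase e)) (G.tl j) (G.tl e)
    · rw [if_pos h1, if_pos (hiff.1 h1)]; norm_num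
    · rw [if_neg h1, if_neg (fun h => h1 (hiff.2 h))]; norm_num

lemma Dmat_mulVec_single (j : Fin G.nE) :
    G.Dmat *ᵥ Pi.single j 1 =
      (Pi.single (G.hd j) 1 - Pi.single (G.tl j) 1 : Fin G.nV → ℚ) := by
  funext v
  rw [Matrix.mulVec_single_one, Matrix.col_apply]
  simp only [Pi.sub_apply, Pi.single_apply, Dmat, mul_one]
  have e1 : (if v = G.hd j then (1:ℚ) else 0) = (if G.hd j = v then (1:ℚ) else 0) := by
    by_cases h : G.hd j = v
    · rw [if_pos h, if_pos h.symm]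
    · rw [if_neg h, if_neg (fun h' => h h'.symm)]
  have e2 : (if v = G.tl j then (1:ℚ) else 0) = (if G.tl j = v then (1:ℚ) else 0) := by
    by_cases h : G.tl j = v
    · rw [if_pos h, if_pos h.symm]
    · rw [if_neg h, if_neg (fun h' => h h'.symm)]
  rw [e1, e2]

lemma walk_vec {A : Set (Fin G.nE)} {u v : Fin G.nV} (h : G.ReachIn A u v) :
    ∃ p : Fin G.nE → ℚ, (∀ j, isInt (p j)) ∧ (∀ j, j ∉ A → p j = 0) ∧
      G.Dmat *ᵥ p = (Pi.single v 1 - Pi.single u 1 : Fin G.nV → ℚ) := by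
  classical
  induction h with
  | refl => exact ⟨0, fun j => isInt_zero, fun j _ => rfl, by simp⟩
  | @tail b c hab step ih =>
      obtain ⟨p, hint, hsupp, hD⟩ := ih
      obtain ⟨j, hj, hor⟩ := step
      rcases hor with ⟨h1, h2⟩ | ⟨h1, h2⟩
      · refine ⟨p - Pi.single j 1, fun i => isInt_sub' (hint i) ?_, fun i hi => ?_, ?_⟩
        · rw [Pi.single_apply]; exact isInt_ite01 _
        · rw [Pi.sub_apply, hsupp i hi, Pi.single_apply,
            if_neg (fun hij => hi (by rw [hij]; exact hj)), sub_zero]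
        · rw [Matrix.mulVec_sub, hD, G.Dmat_mulVec_single, h1, h2]
          abel
      · refine ⟨p + Pi.single j 1, fun i => isInt_add' (hint i) ?_, fun i hi => ?_, ?_⟩
        · rw [Pi.single_apply]; exact isInt_ite01 _
        · rw [Pi.add_apply, hsupp i hi, Pi.single_apply,
            if_neg (fun hij => hi (by rw [hij]; exact hj)), add_zero]
        · rw [Matrix.mulVec_add, hD, G.Dmat_mulVec_single, h1, h2]
          abel

lemma exists_cycVec {F : Finset (Fin G.nE)}
    (hF : ∀ u v, G.ReachIn Set.univ u v → G.ReachIn (↑F) u v)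
    {e : Fin G.nE} (he : e ∉ F) :
    ∃ f, f ∈ G.flowSet ∧ ∀ j, j ∉ F → f j = if j = e then 1 else 0 := by
  classical
  have h0 : G.ReachIn Set.univ (G.hd e) (G.tl e) := G.reachIn_step trivial
  obtain ⟨p, hint, hsupp, hD⟩ := G.walk_vec (hF _ _ h0)
  refine ⟨Pi.single e 1 + p, ?_, ?_⟩
  · rw [G.mem_flowSet_iff]
    constructor
    · intro i
      refine isInt_add' ?_ (hint i)
      rw [Pi.single_apply]; exact isInt_ite01 _
    · rw [G.mem_Kf, G.bndry_eq_mulVec, Matrix.mulVec_add, hD, G.Dmat_mulVec_single]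
      abel
  · intro j hj
    rw [Pi.add_apply, hsupp j (by simpa [Finset.mem_coe] using hj), add_zero,
      Pi.single_apply]

/-- A bundled "spanning forest basis" for the cut and flow lattices. -/
structure ForestData (G : MultiGraph) where
  F : Finset (Fin G.nE)
  fc : Fin G.nE → (Fin G.nE → ℚ)
  cut_delta : ∀ e ∈ F, ∀ j ∈ F, G.cutVec F e j = if j = e then 1 else 0
  fc_mem : ∀ e ∉ F, fc e ∈ G.flowSet
  fc_delta : ∀ e ∉ F, ∀ j ∉ F, fc e j = if j = e then 1 else 0

lemma exists_forestData : Nonempty G.ForestData := by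
  classical
  obtain ⟨F, hF, hgood⟩ := G.exists_goodForest
  have hfc : ∀ e, ∃ f, e ∉ F → f ∈ G.flowSet ∧ ∀ j, j ∉ F → f j = if j = e then 1 else 0 := by
    intro e
    by_cases he : e ∉ F
    · obtain ⟨f, h1, h2⟩ := G.exists_cycVec hF he
      exact ⟨f, fun _ => ⟨h1, h2⟩⟩
    · exact ⟨0, fun h => absurd h he⟩
  choose fc hfc using hfc
  exact ⟨⟨F, fc, fun e he j hj => G.cutVec_delta hgood he hj,
    fun e he => (hfc e he).1, fun e he => (hfc e he).2⟩⟩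

variable {G}

lemma ForestData.cut_span (P : G.ForestData) {c : Fin G.nE → ℚ} (hc : c ∈ G.Kc) :
    c = ∑ e ∈ P.F, c e • G.cutVec P.F e := by
  classical
  set w : Fin G.nE → ℚ := c - ∑ e ∈ P.F, c e • G.cutVec P.F e with hw
  have hwKc : w ∈ G.Kc := by
    refine Submodule.sub_mem _ hc (Submodule.sum_mem _ fun e he => Submodule.smul_mem _ _ ?_)
    rw [← G.span_cutSet]
    exact Submodule.subset_span (G.cutVec_mem_cutSet P.F e)
  have hwF : ∀ j ∈ P.F, w j = 0 := by
    intro j hj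
    have : (∑ e ∈ P.F, c e • G.cutVec P.F e) j = c j := by
      rw [Finset.sum_apply]
      rw [Finset.sum_eq_single_of_mem j hj (fun b hb hbj => by
        rw [Pi.smul_apply, P.cut_delta b hb j hj, if_neg (fun h => hbj h.symm), smul_eq_mul, mul_zero])]
      rw [Pi.smul_apply, P.cut_delta j hj j hj, if_pos rfl, smul_eq_mul, mul_one]
    rw [hw, Pi.sub_apply, this, sub_self]
  have hwnF : ∀ j, j ∉ P.F → w j = 0 := by
    intro j hj
    have horth : w ⬝ᵥ P.fc j = 0 := G.cut_flow_orth hwKc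
      ((G.mem_flowSet_iff.1 (P.fc_mem j hj)).2)
    have hsum : w ⬝ᵥ P.fc j = w j := by
      unfold dotProduct
      rw [Finset.sum_eq_single_of_mem j (Finset.mem_univ j) (fun b _ hbj => by
        by_cases hbF : b ∈ P.F
        · rw [hwF b hbF, zero_mul]
        · rw [P.fc_delta j hj b hbF, if_neg hbj, mul_zero])]
      rw [P.fc_delta j hj j hj, if_pos rfl, mul_one]
    rw [← hsum, horth]
  have : w = 0 := by
    funext j
    by_cases hj : j ∈ P.F
    · exact hwF j hj
    · exact hwnF j hj
  have := sub_eq_zero.1 (hw ▸ this)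
  exact this

lemma ForestData.flow_span (P : G.ForestData) {q : Fin G.nE → ℚ} (hq : q ∈ G.Kf) :
    q = ∑ e ∈ P.Fᶜ, q e • P.fc e := by
  classical
  set w : Fin G.nE → ℚ := q - ∑ e ∈ P.Fᶜ, q e • P.fc e with hw
  have hwKf : w ∈ G.Kf := by
    refine Submodule.sub_mem _ hq (Submodule.sum_mem _ fun e he => Submodule.smul_mem _ _ ?_)
    exact (G.mem_flowSet_iff.1 (P.fc_mem e (Finset.mem_compl.1 he))).2
  have hwnF : ∀ j, j ∉ P.F → w j = 0 := by
    intro j hj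
    have : (∑ e ∈ P.Fᶜ, q e • P.fc e) j = q j := by
      rw [Finset.sum_apply]
      rw [Finset.sum_eq_single_of_mem j (Finset.mem_compl.2 hj) (fun b hb hbj => by
        rw [Pi.smul_apply, P.fc_delta b (Finset.mem_compl.1 hb) j hj,
          if_neg (fun h => hbj h.symm), smul_eq_mul, mul_zero])]
      rw [Pi.smul_apply, P.fc_delta j hj j hj, if_pos rfl, smul_eq_mul, mul_one]
    rw [hw, Pi.sub_apply, this, sub_self]
  have hwF : ∀ j ∈ P.F, w j = 0 := by
    intro j hj
    have horth : w ⬝ᵥ G.cutVec P.F j = 0 := by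
      rw [dotProduct_comm]
      exact G.cut_flow_orth ((G.mem_cutSet_iff.1 (G.cutVec_mem_cutSet P.F j)).2) hwKf
    have hsum : w ⬝ᵥ G.cutVec P.F j = w j := by
      unfold dotProduct
      rw [Finset.sum_eq_single_of_mem j (Finset.mem_univ j) (fun b _ hbj => by
        by_cases hbF : b ∈ P.F
        · rw [P.cut_delta j hj b hbF, if_neg hbj, mul_zero]
        · rw [hwnF b hbF, zero_mul])]
      rw [P.cut_delta j hj j hj, if_pos rfl, mul_one]
    rw [← hsum, horth]
  have : w = 0 := by
    funext j
    by_cases hj : j ∈ P.F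
    · exact hwF j hj
    · exact hwnF j hj
  exact sub_eq_zero.1 (hw ▸ this)

variable (G)

lemma cut_lift (x : Fin G.nE → ℚ) (hx : ∀ c ∈ G.cutSet, isInt (x ⬝ᵥ c)) :
    ∃ z : Fin G.nE → ℚ, (∀ i, isInt (z i)) ∧ (∀ c ∈ G.cutSet, z ⬝ᵥ c = x ⬝ᵥ c) ∧
      z - x ∈ G.Kf := by
  classical
  obtain ⟨P⟩ := G.exists_forestData
  set z : Fin G.nE → ℚ := fun j => if j ∈ P.F then x ⬝ᵥ G.cutVec P.F j else 0 with hz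
  have hzc : ∀ c ∈ G.cutSet, z ⬝ᵥ c = x ⬝ᵥ c := by
    intro c hc
    have hcKc : c ∈ G.Kc := (G.mem_cutSet_iff.1 hc).2
    have hspan := P.cut_span hcKc
    calc z ⬝ᵥ c = ∑ j ∈ P.F, (x ⬝ᵥ G.cutVec P.F j) * c j := by
          unfold dotProduct
          rw [← Finset.sum_subset (Finset.subset_univ P.F) (fun j _ hj => by
            rw [hz]; simp only [if_neg hj, zero_mul])]
          refine Finset.sum_congr rfl fun j hj => ?_
          rw [hz]; simp only [if_pos hj]; rfl
      _ = x ⬝ᵥ c := by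
          conv_rhs => rw [hspan]
          rw [dot_sum_right]
          exact Finset.sum_congr rfl fun j hj => by
            rw [dotProduct_smul, smul_eq_mul, mul_comm]
  refine ⟨z, fun i => ?_, hzc, G.mem_Kf_of_orth_cut fun c hc => ?_⟩
  · by_cases hi : i ∈ P.F
    · have hzi : z i = x ⬝ᵥ G.cutVec P.F i := by rw [hz]; simp [hi]
      rw [hzi]; exact hx _ (G.cutVec_mem_cutSet P.F i)
    · have hzi : z i = 0 := by rw [hz]; simp [hi]
      rw [hzi]; exact isInt_zero
  · rw [sub_dotProduct, hzc c hc, sub_self]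

lemma flow_lift (x : Fin G.nE → ℚ) (hx : ∀ f ∈ G.flowSet, isInt (x ⬝ᵥ f)) :
    ∃ z : Fin G.nE → ℚ, (∀ i, isInt (z i)) ∧ (∀ f ∈ G.flowSet, z ⬝ᵥ f = x ⬝ᵥ f) ∧
      z - x ∈ G.Kc := by
  classical
  obtain ⟨P⟩ := G.exists_forestData
  set z : Fin G.nE → ℚ := fun j => if j ∈ P.F then 0 else x ⬝ᵥ P.fc j with hz
  have hzf : ∀ f ∈ G.flowSet, z ⬝ᵥ f = x ⬝ᵥ f := by
    intro f hf
    have hfKf : f ∈ G.Kf := (G.mem_flowSet_iff.1 hf).2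
    have hspan := P.flow_span hfKf
    calc z ⬝ᵥ f = ∑ j ∈ P.Fᶜ, (x ⬝ᵥ P.fc j) * f j := by
          unfold dotProduct
          rw [← Finset.sum_subset (Finset.subset_univ P.Fᶜ) (fun j _ hj => by
            rw [hz]; simp only [if_pos (by simpa using hj : j ∈ P.F), zero_mul])]
          refine Finset.sum_congr rfl fun j hj => ?_
          rw [hz]; simp only [if_neg (Finset.mem_compl.1 hj)]; rfl
      _ = x ⬝ᵥ f := by
          conv_rhs => rw [hspan]
          rw [dot_sum_right]
          exact Finset.sum_congr rfl fun j hj => by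
            rw [dotProduct_smul, smul_eq_mul, mul_comm]
  refine ⟨z, fun i => ?_, hzf, G.mem_Kc_of_orth_flow fun f hf => ?_⟩
  · by_cases hi : i ∈ P.F
    · have hzi : z i = 0 := by rw [hz]; simp [hi]
      rw [hzi]; exact isInt_zero
    · have hzi : z i = x ⬝ᵥ P.fc i := by rw [hz]; simp [hi]
      rw [hzi]; exact hx _ (P.fc_mem i hi)
  · rw [sub_dotProduct, hzf f hf, sub_self]

lemma cut_parity (u : Fin G.nE → ℚ) (hu : ∀ i, isInt (u i))
    (h : ∀ c ∈ G.cutSet, evenQ (u ⬝ᵥ c)) :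
    ∃ f ∈ G.flowSet, ∀ i, evenQ (u i - f i) := by
  classical
  obtain ⟨P⟩ := G.exists_forestData
  set f : Fin G.nE → ℚ := ∑ e ∈ P.Fᶜ, u e • P.fc e with hf
  have hfmem : f ∈ G.flowSet := by
    rw [G.mem_flowSet_iff]
    constructor
    · intro i
      rw [hf, Finset.sum_apply]
      refine isInt_sum' _ _ fun e he => ?_
      rw [Pi.smul_apply, smul_eq_mul]
      exact isInt_mul' (hu e)
        ((G.mem_flowSet_iff.1 (P.fc_mem e (Finset.mem_compl.1 he))).1 i)
    · exact Submodule.sum_mem _ fun e he => Submodule.smul_mem _ _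
        ((G.mem_flowSet_iff.1 (P.fc_mem e (Finset.mem_compl.1 he))).2)
  have hoff : ∀ i, i ∉ P.F → u i - f i = 0 := by
    intro i hi
    have : f i = u i := by
      rw [hf, Finset.sum_apply, Finset.sum_eq_single_of_mem i (Finset.mem_compl.2 hi)
        (fun b hb hbi => by
          rw [Pi.smul_apply, P.fc_delta b (Finset.mem_compl.1 hb) i hi,
            if_neg (fun h => hbi h.symm), smul_eq_mul, mul_zero])]
      rw [Pi.smul_apply, P.fc_delta i hi i hi, if_pos rfl, smul_eq_mul, mul_one]
    rw [this, sub_self]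
  refine ⟨f, hfmem, fun i => ?_⟩
  by_cases hi : i ∈ P.F
  · have hsum : (u - f) ⬝ᵥ G.cutVec P.F i = (u - f) i := by
      unfold dotProduct
      rw [Finset.sum_eq_single_of_mem i (Finset.mem_univ i) (fun b _ hbi => by
        by_cases hbF : b ∈ P.F
        · rw [P.cut_delta i hi b hbF, if_neg hbi, mul_zero]
        · rw [Pi.sub_apply, hoff b hbF, zero_mul])]
      rw [P.cut_delta i hi i hi, if_pos rfl, mul_one]
    have horth : f ⬝ᵥ G.cutVec P.F i = 0 := by
      rw [dotProduct_comm]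
      exact G.cut_flow_orth ((G.mem_cutSet_iff.1 (G.cutVec_mem_cutSet P.F i)).2)
        ((G.mem_flowSet_iff.1 hfmem).2)
    have : (u - f) ⬝ᵥ G.cutVec P.F i = u ⬝ᵥ G.cutVec P.F i := by
      rw [sub_dotProduct, horth, sub_zero]
    have heven := h _ (G.cutVec_mem_cutSet P.F i)
    rw [← Pi.sub_apply u f i, ← hsum, this]
    exact heven
  · rw [hoff i hi]; exact evenQ_zero

lemma flow_parity (u : Fin G.nE → ℚ) (hu : ∀ i, isInt (u i))
    (h : ∀ f ∈ G.flowSet, evenQ (u ⬝ᵥ f)) :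
    ∃ c ∈ G.cutSet, ∀ i, evenQ (u i - c i) := by
  classical
  obtain ⟨P⟩ := G.exists_forestData
  set c : Fin G.nE → ℚ := ∑ e ∈ P.F, u e • G.cutVec P.F e with hc
  have hcmem : c ∈ G.cutSet := by
    rw [G.mem_cutSet_iff]
    constructor
    · intro i
      rw [hc, Finset.sum_apply]
      refine isInt_sum' _ _ fun e he => ?_
      rw [Pi.smul_apply, smul_eq_mul]
      exact isInt_mul' (hu e)
        ((G.mem_cutSet_iff.1 (G.cutVec_mem_cutSet P.F e)).1 i)
    · exact Submodule.sum_mem _ fun e he => Submodule.smul_mem _ _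
        ((G.mem_cutSet_iff.1 (G.cutVec_mem_cutSet P.F e)).2)
  have hoff : ∀ i, i ∈ P.F → u i - c i = 0 := by
    intro i hi
    have : c i = u i := by
      rw [hc, Finset.sum_apply, Finset.sum_eq_single_of_mem i hi (fun b hb hbi => by
        rw [Pi.smul_apply, P.cut_delta b hb i hi, if_neg (fun h => hbi h.symm), smul_eq_mul, mul_zero])]
      rw [Pi.smul_apply, P.cut_delta i hi i hi, if_pos rfl, smul_eq_mul, mul_one]
    rw [this, sub_self]
  refine ⟨c, hcmem, fun i => ?_⟩
  by_cases hi : i ∈ P.F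
  · rw [hoff i hi]; exact evenQ_zero
  · have hsum : (u - c) ⬝ᵥ P.fc i = (u - c) i := by
      unfold dotProduct
      rw [Finset.sum_eq_single_of_mem i (Finset.mem_univ i) (fun b _ hbi => by
        by_cases hbF : b ∈ P.F
        · rw [Pi.sub_apply, hoff b hbF, zero_mul]
        · rw [P.fc_delta i hi b hbF, if_neg hbi, mul_zero])]
      rw [P.fc_delta i hi i hi, if_pos rfl, mul_one]
    have horth : c ⬝ᵥ P.fc i = 0 :=
      G.cut_flow_orth ((G.mem_cutSet_iff.1 hcmem).2)
        ((G.mem_flowSet_iff.1 (P.fc_mem i hi)).2)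
    have heq : (u - c) ⬝ᵥ P.fc i = u ⬝ᵥ P.fc i := by
      rw [sub_dotProduct, horth, sub_zero]
    have heven := h _ (P.fc_mem i hi)
    rw [← Pi.sub_apply u c i, ← hsum, heq]
    exact heven

/-- One step in the direction of the sign of `ε`. -/
def pstep (G : MultiGraph) (ε : Fin G.nE → ℚ) (u v : Fin G.nV) : Prop :=
  ∃ j, (0 < ε j ∧ G.tl j = u ∧ G.hd j = v) ∨ (ε j < 0 ∧ G.hd j = u ∧ G.tl j = v)

/-- The tail of an edge, in the orientation given by the sign of `ε`. -/
def ptail (G : MultiGraph) (ε : Fin G.nE → ℚ) (j : Fin G.nE) : Fin G.nV :=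
  if 0 < ε j then G.tl j else G.hd j

/-- The head of an edge, in the orientation given by the sign of `ε`. -/
def phead (G : MultiGraph) (ε : Fin G.nE → ℚ) (j : Fin G.nE) : Fin G.nV :=
  if 0 < ε j then G.hd j else G.tl j

/-- `pstep`-reachability in at most `k` steps. -/
def RnStep (G : MultiGraph) (ε : Fin G.nE → ℚ) : ℕ → Fin G.nV → Fin G.nV → Prop
  | 0 => fun u v => u = v
  | (k+1) => fun u v => RnStep G ε k u v ∨ ∃ w, pstep G ε u w ∧ RnStep G ε k w v

variable {G}

lemma rn_exists {ε : Fin G.nE → ℚ} {u v : Fin G.nV}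
    (h : Relation.ReflTransGen (pstep G ε) u v) : ∃ k, RnStep G ε k u v := by
  induction h using Relation.ReflTransGen.head_induction_on with
  | refl => exact ⟨0, rfl⟩
  | head step _ ih =>
      obtain ⟨k, hk⟩ := ih
      exact ⟨k + 1, Or.inr ⟨_, step, hk⟩⟩

lemma rn_reach {ε : Fin G.nE → ℚ} {v : Fin G.nV} (k : ℕ) :
    ∀ {u}, RnStep G ε k u v → Relation.ReflTransGen (pstep G ε) u v := by
  induction k with
  | zero => intro u h; exact h ▸ Relation.ReflTransGen.refl
  | succ k ih =>
      rintro u (h | ⟨w, hs, h⟩)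
      · exact ih h
      · exact Relation.ReflTransGen.head hs (ih h)

lemma odd_pos_ge_one {q : ℚ} (h : ∃ m : ℤ, q = 2*m+1) (hq : 0 < q) : 1 ≤ q := by
  obtain ⟨m, rfl⟩ := h
  have : (0:ℤ) < 2*m+1 := by exact_mod_cast hq
  have : (1:ℤ) ≤ 2*m+1 := by omega
  exact_mod_cast this

lemma odd_neg_le_neg_one {q : ℚ} (h : ∃ m : ℤ, q = 2*m+1) (hq : q < 0) : q ≤ -1 := by
  obtain ⟨m, rfl⟩ := h
  have : (2*m+1:ℤ) < 0 := by exact_mod_cast hq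
  have : (2*m+1:ℤ) ≤ -1 := by omega
  exact_mod_cast this

lemma odd_ne_zero {q : ℚ} (h : ∃ m : ℤ, q = 2*m+1) : q ≠ 0 := by
  obtain ⟨m, rfl⟩ := h
  intro h0
  have : (2*m+1:ℤ) = 0 := by exact_mod_cast h0
  omega

lemma core_path (ε : Fin G.nE → ℚ) (v : Fin G.nV) (m : ℕ) :
    ∀ u, Relation.ReflTransGen (pstep G ε) u v →
      sInf {k | RnStep G ε k u v} = m →
      ∃ p : Fin G.nE → ℚ,
        (∀ j, p j = 0 ∨ (p j = 1 ∧ 0 < ε j) ∨ (p j = -1 ∧ ε j < 0)) ∧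
        G.Dmat *ᵥ p = (Pi.single v 1 - Pi.single u 1 : Fin G.nV → ℚ) ∧
        (∀ j, p j ≠ 0 → 1 ≤ sInf {k | RnStep G ε k (ptail G ε j) v} ∧
          sInf {k | RnStep G ε k (ptail G ε j) v} ≤ m) := by
  induction m using Nat.strong_induction_on with
  | _ m ihm =>
  intro u hu hd
  have hne : {k | RnStep G ε k u v}.Nonempty := rn_exists hu
  have hmem : RnStep G ε m u v := hd ▸ Nat.sInf_mem hne
  match m, hd, hmem, ihm with
  | 0, hd, hmem, ihm =>
      have huv : u = v := hmem
      subst huv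
      exact ⟨(0 : Fin G.nE → ℚ), fun j => Or.inl rfl, by simp, fun j hj => absurd rfl hj⟩
  | (m'+1), hd, hmem, ihm =>
      rcases hmem with h | ⟨w, hstep, hRn⟩
      · have hle : sInf {k | RnStep G ε k u v} ≤ m' := Nat.sInf_le h
        omega
      · have hdw_le : sInf {k | RnStep G ε k w v} ≤ m' := Nat.sInf_le hRn
        have hws : RnStep G ε (sInf {k | RnStep G ε k w v}) w v :=
          Nat.sInf_mem (⟨m', hRn⟩ : {k | RnStep G ε k w v}.Nonempty)
        have hdu_le : sInf {k | RnStep G ε k u v} ≤ sInf {k | RnStep G ε k w v} + 1 :=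
          Nat.sInf_le (Or.inr ⟨w, hstep, hws⟩)
        have hdw : sInf {k | RnStep G ε k w v} = m' := by omega
        obtain ⟨p, hp1, hp2, hp3⟩ := ihm m' (by omega) w (rn_reach _ hRn) hdw
        rcases hstep with ⟨j₀, ⟨hpos, htl, hhd⟩ | ⟨hneg, hhd, htl⟩⟩
        · -- positive edge: tl j₀ = u, hd j₀ = w
          have hpt : ptail G ε j₀ = u := by unfold ptail; rw [if_pos hpos, htl]
          have hpj₀ : p j₀ = 0 := by
            by_contra h0
            have h3 := (hp3 j₀ h0).2
            rw [hpt, hd] at h3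
            omega
          refine ⟨p + (Pi.single j₀ 1 : Fin G.nE → ℚ), fun j => ?_, ?_, fun j hj => ?_⟩
          · by_cases hjj : j = j₀
            · subst hjj
              refine Or.inr (Or.inl ⟨?_, hpos⟩)
              rw [Pi.add_apply, hpj₀, Pi.single_eq_same, zero_add]
            · have : (Pi.single j₀ 1 : Fin G.nE → ℚ) j = 0 := by
                rw [Pi.single_apply, if_neg hjj]
              rw [Pi.add_apply, this, add_zero]
              exact hp1 j
          · rw [Matrix.mulVec_add, hp2, G.Dmat_mulVec_single, hhd, htl]
            abel
          · by_cases hjj : j = j₀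
            · subst hjj
              rw [hpt, hd]
              omega
            · have hz : (Pi.single j₀ 1 : Fin G.nE → ℚ) j = 0 := by
                rw [Pi.single_apply, if_neg hjj]
              rw [Pi.add_apply, hz, add_zero] at hj
              have := hp3 j hj
              omega
        · -- negative edge: hd j₀ = u, tl j₀ = w
          have hnpos : ¬ 0 < ε j₀ := by linarith
          have hpt : ptail G ε j₀ = u := by unfold ptail; rw [if_neg hnpos, hhd]
          have hpj₀ : p j₀ = 0 := by
            by_contra h0
            have h3 := (hp3 j₀ h0).2
            rw [hpt, hd] at h3
            omega
          refine ⟨p - (Pi.single j₀ 1 : Fin G.nE → ℚ), fun j => ?_, ?_, fun j hj => ?_⟩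
          · by_cases hjj : j = j₀
            · subst hjj
              refine Or.inr (Or.inr ⟨?_, hneg⟩)
              rw [Pi.sub_apply, hpj₀, Pi.single_eq_same, zero_sub]
            · have : (Pi.single j₀ 1 : Fin G.nE → ℚ) j = 0 := by
                rw [Pi.single_apply, if_neg hjj]
              rw [Pi.sub_apply, this, sub_zero]
              exact hp1 j
          · rw [Matrix.mulVec_sub, hp2, G.Dmat_mulVec_single, hhd, htl]
            abel
          · by_cases hjj : j = j₀
            · subst hjj
              rw [hpt, hd]
              omega
            · have hz : (Pi.single j₀ 1 : Fin G.nE → ℚ) j = 0 := by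
                rw [Pi.single_apply, if_neg hjj]
              rw [Pi.sub_apply, hz, sub_zero] at hj
              have := hp3 j hj
              omega

lemma core_case_flow {ε : Fin G.nE → ℚ} (hodd : ∀ i, ∃ m : ℤ, ε i = 2*m+1)
    (e₀ : Fin G.nE) (hbig : 3 ≤ |ε e₀|)
    (hA : Relation.ReflTransGen (pstep G ε) (phead G ε e₀) (ptail G ε e₀)) :
    ∃ f ∈ G.flowSet, f ⬝ᵥ f < ε ⬝ᵥ f := by
  classical
  set u₀ := phead G ε e₀ with hu₀
  set v₀ := ptail G ε e₀ with hv₀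
  obtain ⟨p, hp1, hp2, hp3⟩ := core_path ε v₀ (sInf {k | RnStep G ε k u₀ v₀}) u₀ hA rfl
  have hdv₀ : sInf {k | RnStep G ε k v₀ v₀} = 0 :=
    Nat.le_antisymm (Nat.sInf_le rfl) (Nat.zero_le _)
  have hpe₀ : p e₀ = 0 := by
    by_contra h0
    have := (hp3 e₀ h0).1
    rw [show ptail G ε e₀ = v₀ from rfl, hdv₀] at this
    omega
  set σ : ℚ := if 0 < ε e₀ then 1 else -1 with hσ
  set f : Fin G.nE → ℚ := p + σ • (Pi.single e₀ 1 : Fin G.nE → ℚ) with hf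
  have hfe₀ : f e₀ = σ := by
    rw [hf, Pi.add_apply, hpe₀, Pi.smul_apply, Pi.single_eq_same, smul_eq_mul,
      mul_one, zero_add]
  have hfj : ∀ j, j ≠ e₀ → f j = p j := by
    intro j hj
    rw [hf, Pi.add_apply, Pi.smul_apply, Pi.single_apply, if_neg hj, smul_zero, add_zero]
  have hfflow : f ∈ G.flowSet := by
    rw [G.mem_flowSet_iff]
    constructor
    · intro i
      by_cases hi : i = e₀
      · subst hi
        rw [hfe₀, hσ]
        split
        · exact isInt_one
        · exact ⟨-1, by norm_num⟩
      · rw [hfj i hi]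
        rcases hp1 i with h | ⟨h, _⟩ | ⟨h, _⟩
        · rw [h]; exact isInt_zero
        · rw [h]; exact isInt_one
        · rw [h]; exact ⟨-1, by norm_num⟩
    · rw [G.mem_Kf, G.bndry_eq_mulVec, hf, Matrix.mulVec_add, hp2,
        Matrix.mulVec_smul, G.Dmat_mulVec_single]
      by_cases hsgn : 0 < ε e₀
      · have h1 : u₀ = G.hd e₀ := by rw [hu₀]; unfold phead; rw [if_pos hsgn]
        have h2 : v₀ = G.tl e₀ := by rw [hv₀]; unfold ptail; rw [if_pos hsgn]
        rw [hσ, if_pos hsgn, h1, h2]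
        simp only [one_smul]
        abel
      · have h1 : u₀ = G.tl e₀ := by rw [hu₀]; unfold phead; rw [if_neg hsgn]
        have h2 : v₀ = G.hd e₀ := by rw [hv₀]; unfold ptail; rw [if_neg hsgn]
        rw [hσ, if_neg hsgn, h1, h2]
        simp only [neg_smul, one_smul]
        abel
  refine ⟨f, hfflow, ?_⟩
  have hterm : ∀ j, j ≠ e₀ → 0 ≤ ε j * f j - f j * f j := by
    intro j hj
    rw [hfj j hj]
    rcases hp1 j with h | ⟨h, hsgn⟩ | ⟨h, hsgn⟩
    · rw [h]; ring_nf; exact le_refl 0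
    · rw [h]
      have := odd_pos_ge_one (hodd j) hsgn
      nlinarith
    · rw [h]
      have := odd_neg_le_neg_one (hodd j) hsgn
      nlinarith
  have hterm₀ : 2 ≤ ε e₀ * f e₀ - f e₀ * f e₀ := by
    rw [hfe₀, hσ]
    by_cases hsgn : 0 < ε e₀
    · rw [if_pos hsgn]
      have : 3 ≤ ε e₀ := by
        rw [abs_of_pos hsgn] at hbig; exact hbig
      nlinarith
    · rw [if_neg hsgn]
      have hneg : ε e₀ < 0 := lt_of_le_of_ne (le_of_not_gt hsgn) (odd_ne_zero (hodd e₀))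
      have : ε e₀ ≤ -3 := by
        rw [abs_of_neg hneg] at hbig; linarith
      nlinarith
  have hsum : ε ⬝ᵥ f - f ⬝ᵥ f = ∑ j, (ε j * f j - f j * f j) := by
    unfold dotProduct
    rw [Finset.sum_sub_distrib]
  have hge : 2 ≤ ε ⬝ᵥ f - f ⬝ᵥ f := by
    rw [hsum]
    calc (2:ℚ) ≤ ε e₀ * f e₀ - f e₀ * f e₀ := hterm₀
    _ ≤ ∑ j, (ε j * f j - f j * f j) := by
        refine Finset.single_le_sum (f := fun j => ε j * f j - f j * f j) ?_ (Finset.mem_univ e₀)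
        intro j _
        try dsimp only
        by_cases hj : j = e₀
        · subst hj; linarith
        · exact hterm j hj
  linarith

lemma core_case_cut {ε : Fin G.nE → ℚ} (hodd : ∀ i, ∃ m : ℤ, ε i = 2*m+1)
    (e₀ : Fin G.nE) (hbig : 3 ≤ |ε e₀|)
    (hB : ¬ Relation.ReflTransGen (pstep G ε) (phead G ε e₀) (ptail G ε e₀)) :
    ∃ c ∈ G.cutSet, c ⬝ᵥ c < ε ⬝ᵥ c := by
  classical
  set u₀ := phead G ε e₀ with hu₀
  set U : Set (Fin G.nV) := {w | Relation.ReflTransGen (pstep G ε) u₀ w} with hU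
  set c : Fin G.nE → ℚ :=
    fun j => (if G.hd j ∈ U then (1:ℚ) else 0) - (if G.tl j ∈ U then (1:ℚ) else 0) with hc
  have hclosed_pos : ∀ j, 0 < ε j → G.tl j ∈ U → G.hd j ∈ U := by
    intro j hsgn hmem
    exact Relation.ReflTransGen.tail hmem ⟨j, Or.inl ⟨hsgn, rfl, rfl⟩⟩
  have hclosed_neg : ∀ j, ε j < 0 → G.hd j ∈ U → G.tl j ∈ U := by
    intro j hsgn hmem
    exact Relation.ReflTransGen.tail hmem ⟨j, Or.inr ⟨hsgn, rfl, rfl⟩⟩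
  have hcmem : c ∈ G.cutSet := by
    rw [G.mem_cutSet_iff]
    constructor
    · intro i
      rw [hc]
      exact isInt_sub' (isInt_ite01 _) (isInt_ite01 _)
    · rw [G.mem_Kc]
      exact ⟨fun w => if w ∈ U then (1:ℚ) else 0, fun j => by rw [hc]⟩
  have hterm : ∀ j, j ≠ e₀ → 0 ≤ ε j * c j - c j * c j := by
    intro j _
    by_cases h1 : G.hd j ∈ U <;> by_cases h2 : G.tl j ∈ U
    · have : c j = 0 := by rw [hc]; simp [h1, h2]
      rw [this]; ring_nf; exact le_refl 0
    · have hcj : c j = 1 := by rw [hc]; simp [h1, h2]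
      have hsgn : 0 < ε j := by
        rcases lt_trichotomy (ε j) 0 with h | h | h
        · exact absurd (hclosed_neg j h h1) h2
        · exact absurd h (odd_ne_zero (hodd j))
        · exact h
      have := odd_pos_ge_one (hodd j) hsgn
      rw [hcj]; nlinarith
    · have hcj : c j = -1 := by rw [hc]; simp [h1, h2]
      have hsgn : ε j < 0 := by
        rcases lt_trichotomy (ε j) 0 with h | h | h
        · exact h
        · exact absurd h (odd_ne_zero (hodd j))
        · exact absurd (hclosed_pos j h h2) h1
      have := odd_neg_le_neg_one (hodd j) hsgn
      rw [hcj]; nlinarith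
    · have : c j = 0 := by rw [hc]; simp [h1, h2]
      rw [this]; ring_nf; exact le_refl 0
  have hu₀U : u₀ ∈ U := Relation.ReflTransGen.refl
  have hv₀U : ptail G ε e₀ ∉ U := hB
  have hterm₀ : 2 ≤ ε e₀ * c e₀ - c e₀ * c e₀ := by
    by_cases hsgn : 0 < ε e₀
    · have h1 : G.hd e₀ ∈ U := by
        rw [show G.hd e₀ = u₀ from by rw [hu₀]; unfold phead; rw [if_pos hsgn]]
        exact hu₀U
      have h2 : G.tl e₀ ∉ U := by
        rw [show G.tl e₀ = ptail G ε e₀ from by unfold ptail; rw [if_pos hsgn]]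
        exact hv₀U
      have hcj : c e₀ = 1 := by rw [hc]; simp [h1, h2]
      have h3 : 3 ≤ ε e₀ := by rw [abs_of_pos hsgn] at hbig; exact hbig
      rw [hcj]; nlinarith
    · have hneg : ε e₀ < 0 := lt_of_le_of_ne (le_of_not_gt hsgn) (odd_ne_zero (hodd e₀))
      have h1 : G.tl e₀ ∈ U := by
        rw [show G.tl e₀ = u₀ from by rw [hu₀]; unfold phead; rw [if_neg hsgn]]
        exact hu₀U
      have h2 : G.hd e₀ ∉ U := by
        rw [show G.hd e₀ = ptail G ε e₀ from by unfold ptail; rw [if_neg hsgn]]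
        exact hv₀U
      have hcj : c e₀ = -1 := by rw [hc]; simp [h1, h2]
      have h3 : ε e₀ ≤ -3 := by rw [abs_of_neg hneg] at hbig; linarith
      rw [hcj]; nlinarith
  refine ⟨c, hcmem, ?_⟩
  have hsum : ε ⬝ᵥ c - c ⬝ᵥ c = ∑ j, (ε j * c j - c j * c j) := by
    unfold dotProduct
    rw [Finset.sum_sub_distrib]
  have hge : 2 ≤ ε ⬝ᵥ c - c ⬝ᵥ c := by
    rw [hsum]
    calc (2:ℚ) ≤ ε e₀ * c e₀ - c e₀ * c e₀ := hterm₀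
    _ ≤ ∑ j, (ε j * c j - c j * c j) := by
        refine Finset.single_le_sum (f := fun j => ε j * c j - c j * c j) ?_ (Finset.mem_univ e₀)
        intro j _
        try dsimp only
        by_cases hj : j = e₀
        · subst hj; linarith
        · exact hterm j hj
  linarith

lemma core_dichotomy {ε : Fin G.nE → ℚ} (hodd : ∀ i, ∃ m : ℤ, ε i = 2*m+1)
    (e₀ : Fin G.nE) (hbig : 3 ≤ |ε e₀|) :
    (∃ f ∈ G.flowSet, f ⬝ᵥ f < ε ⬝ᵥ f) ∨ (∃ c ∈ G.cutSet, c ⬝ᵥ c < ε ⬝ᵥ c) := by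
  classical
  by_cases hA : Relation.ReflTransGen (pstep G ε) (phead G ε e₀) (ptail G ε e₀)
  · exact Or.inl (core_case_flow hodd e₀ hbig hA)
  · exact Or.inr (core_case_cut hodd e₀ hbig hA)

end MultiGraph

section LatticeLevel

lemma mem_dualOf {ι : Type} [Fintype ι] [DecidableEq ι] {B : Matrix ι ι ℤ}
    {S : Set (ι → ℚ)} {x : ι → ℚ} :
    x ∈ dualOf B S ↔ x ∈ Submodule.span ℚ S ∧ ∀ y ∈ S, isInt (qform B x y) :=
  Iff.rfl

lemma mem_CharOf {ι : Type} [Fintype ι] [DecidableEq ι] {B : Matrix ι ι ℤ}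
    {S : Set (ι → ℚ)} {x : ι → ℚ} :
    x ∈ CharOf B S ↔ x ∈ dualOf B S ∧
      ∀ y ∈ S, ∃ m : ℤ, qform B x y - qform B y y = 2 * (m : ℚ) :=
  Iff.rfl

lemma single_mem_intVecs {ι : Type} [Fintype ι] [DecidableEq ι] (i : ι) :
    (Pi.single i 1 : ι → ℚ) ∈ intVecs ι := by
  intro k
  rw [Pi.single_apply]
  exact MultiGraph.isInt_ite01 _

lemma mem_span_intVecs {ι : Type} [Fintype ι] [DecidableEq ι] (x : ι → ℚ) :
    x ∈ Submodule.span ℚ (intVecs ι) := by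
  have hx : x = ∑ i, x i • (Pi.single i 1 : ι → ℚ) := by
    funext j
    rw [Finset.sum_apply,
      Finset.sum_eq_single_of_mem j (Finset.mem_univ j) (fun b _ hbj => by
        rw [Pi.smul_apply, Pi.single_apply, if_neg (fun h => hbj h.symm), smul_zero]),
      Pi.smul_apply, Pi.single_eq_same, smul_eq_mul, mul_one]
  rw [hx]
  exact Submodule.sum_mem _ fun i _ =>
    Submodule.smul_mem _ _ (Submodule.subset_span (single_mem_intVecs i))

lemma mem_dual_intVecs {ι : Type} [Fintype ι] [DecidableEq ι] {x : ι → ℚ} :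
    x ∈ dualOf (1 : Matrix ι ι ℤ) (intVecs ι) ↔ ∀ i, isInt (x i) := by
  rw [mem_dualOf]
  constructor
  · rintro ⟨-, h⟩ i
    have := h _ (single_mem_intVecs i)
    rwa [qform_one, dotProduct_single, mul_one] at this
  · intro h
    refine ⟨mem_span_intVecs x, fun y hy => ?_⟩
    rw [qform_one]
    exact isInt_sum' _ _ fun i _ => isInt_mul' (h i) (hy i)

lemma odd_term_even (m k : ℤ) : evenQ ((2*(m:ℚ)+1) * k - k * k) := by
  obtain ⟨t, ht⟩ := Int.even_mul_succ_self (k - 1)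
  have htQ : ((k:ℚ) - 1) * ((k - 1) + 1) = t + t := by exact_mod_cast ht
  exact ⟨m * k - t, by push_cast; linarith [htQ]⟩

lemma odd_dot_parity {ι : Type} [Fintype ι] [DecidableEq ι] {χ y : ι → ℚ}
    (hodd : ∀ i, ∃ m : ℤ, χ i = 2*m+1) (hy : ∀ i, isInt (y i)) :
    evenQ (χ ⬝ᵥ y - y ⬝ᵥ y) := by
  unfold dotProduct
  rw [← Finset.sum_sub_distrib]
  refine evenQ_sum _ _ fun i _ => ?_
  obtain ⟨m, hm⟩ := hodd i
  obtain ⟨k, hk⟩ := hy i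
  rw [hm, hk]
  exact odd_term_even m k

lemma mem_char_intVecs {ι : Type} [Fintype ι] [DecidableEq ι] {χ : ι → ℚ} :
    χ ∈ CharOf (1 : Matrix ι ι ℤ) (intVecs ι) ↔ ∀ i, ∃ m : ℤ, χ i = 2*m+1 := by
  rw [mem_CharOf]
  constructor
  · rintro ⟨hd, h⟩ i
    obtain ⟨m, hm⟩ := h _ (single_mem_intVecs i)
    rw [qform_one, qform_one, dotProduct_single, mul_one, single_dotProduct, one_mul,
      Pi.single_eq_same] at hm
    exact ⟨m, by linarith⟩
  · intro h
    have hint : ∀ i, isInt (χ i) := fun i => by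
      obtain ⟨m, hm⟩ := h i; exact ⟨2*m+1, by rw [hm]; push_cast; ring⟩
    refine ⟨mem_dual_intVecs.2 hint, fun y hy => ?_⟩
    rw [qform_one, qform_one]
    exact odd_dot_parity h hy

namespace MultiGraph

variable (G : MultiGraph)

lemma cutSet_zero : (0 : Fin G.nE → ℚ) ∈ G.cutSet :=
  G.mem_cutSet_iff.2 ⟨fun _ => isInt_zero, Submodule.zero_mem _⟩

lemma cutSet_neg {a : Fin G.nE → ℚ} (ha : a ∈ G.cutSet) : -a ∈ G.cutSet := by
  obtain ⟨h1, h2⟩ := G.mem_cutSet_iff.1 ha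
  exact G.mem_cutSet_iff.2 ⟨fun i => by rw [Pi.neg_apply]; exact isInt_neg' (h1 i),
    Submodule.neg_mem _ h2⟩

lemma cutSet_add {a b : Fin G.nE → ℚ} (ha : a ∈ G.cutSet) (hb : b ∈ G.cutSet) :
    a + b ∈ G.cutSet := by
  obtain ⟨h1, h2⟩ := G.mem_cutSet_iff.1 ha
  obtain ⟨h3, h4⟩ := G.mem_cutSet_iff.1 hb
  exact G.mem_cutSet_iff.2 ⟨fun i => by rw [Pi.add_apply]; exact isInt_add' (h1 i) (h3 i),
    Submodule.add_mem _ h2 h4⟩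

lemma cutSet_sub {a b : Fin G.nE → ℚ} (ha : a ∈ G.cutSet) (hb : b ∈ G.cutSet) :
    a - b ∈ G.cutSet := by
  rw [sub_eq_add_neg]
  exact G.cutSet_add ha (G.cutSet_neg hb)

lemma flowSet_zero : (0 : Fin G.nE → ℚ) ∈ G.flowSet :=
  G.mem_flowSet_iff.2 ⟨fun _ => isInt_zero, Submodule.zero_mem _⟩

lemma flowSet_neg {a : Fin G.nE → ℚ} (ha : a ∈ G.flowSet) : -a ∈ G.flowSet := by
  obtain ⟨h1, h2⟩ := G.mem_flowSet_iff.1 ha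
  exact G.mem_flowSet_iff.2 ⟨fun i => by rw [Pi.neg_apply]; exact isInt_neg' (h1 i),
    Submodule.neg_mem _ h2⟩

lemma flowSet_add {a b : Fin G.nE → ℚ} (ha : a ∈ G.flowSet) (hb : b ∈ G.flowSet) :
    a + b ∈ G.flowSet := by
  obtain ⟨h1, h2⟩ := G.mem_flowSet_iff.1 ha
  obtain ⟨h3, h4⟩ := G.mem_flowSet_iff.1 hb
  exact G.mem_flowSet_iff.2 ⟨fun i => by rw [Pi.add_apply]; exact isInt_add' (h1 i) (h3 i),
    Submodule.add_mem _ h2 h4⟩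

lemma flowSet_sub {a b : Fin G.nE → ℚ} (ha : a ∈ G.flowSet) (hb : b ∈ G.flowSet) :
    a - b ∈ G.flowSet := by
  rw [sub_eq_add_neg]
  exact G.flowSet_add ha (G.flowSet_neg hb)

lemma sameClass_cut_symm {a b : Fin G.nE → ℚ} (h : SameClass G.cutSet a b) :
    SameClass G.cutSet b a := by
  obtain ⟨y, hy, rfl⟩ := h
  exact ⟨-y, G.cutSet_neg hy, by rw [smul_neg]; abel⟩

lemma sameClass_cut_trans {a b c : Fin G.nE → ℚ} (h1 : SameClass G.cutSet a b)
    (h2 : SameClass G.cutSet b c) : SameClass G.cutSet a c := by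
  obtain ⟨y, hy, rfl⟩ := h1
  obtain ⟨y', hy', rfl⟩ := h2
  exact ⟨y + y', G.cutSet_add hy hy', by rw [smul_add]; abel⟩

lemma sameClass_flow_symm {a b : Fin G.nE → ℚ} (h : SameClass G.flowSet a b) :
    SameClass G.flowSet b a := by
  obtain ⟨y, hy, rfl⟩ := h
  exact ⟨-y, G.flowSet_neg hy, by rw [smul_neg]; abel⟩

lemma sameClass_flow_trans {a b c : Fin G.nE → ℚ} (h1 : SameClass G.flowSet a b)
    (h2 : SameClass G.flowSet b c) : SameClass G.flowSet a c := by
  obtain ⟨y, hy, rfl⟩ := h1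
  obtain ⟨y', hy', rfl⟩ := h2
  exact ⟨y + y', G.flowSet_add hy hy', by rw [smul_add]; abel⟩

lemma mem_dual_cut {x : Fin G.nE → ℚ} :
    x ∈ dualOf (1 : Matrix (Fin G.nE) (Fin G.nE) ℤ) G.cutSet ↔
      x ∈ G.Kc ∧ ∀ c ∈ G.cutSet, isInt (x ⬝ᵥ c) := by
  rw [mem_dualOf, G.span_cutSet]
  constructor
  · rintro ⟨h1, h2⟩
    exact ⟨h1, fun c hc => by rw [← qform_one]; exact h2 c hc⟩
  · rintro ⟨h1, h2⟩
    exact ⟨h1, fun c hc => by rw [qform_one]; exact h2 c hc⟩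

lemma mem_dual_flow {x : Fin G.nE → ℚ} :
    x ∈ dualOf (1 : Matrix (Fin G.nE) (Fin G.nE) ℤ) G.flowSet ↔
      x ∈ G.Kf ∧ ∀ f ∈ G.flowSet, isInt (x ⬝ᵥ f) := by
  rw [mem_dualOf, G.span_flowSet]
  constructor
  · rintro ⟨h1, h2⟩
    exact ⟨h1, fun c hc => by rw [← qform_one]; exact h2 c hc⟩
  · rintro ⟨h1, h2⟩
    exact ⟨h1, fun c hc => by rw [qform_one]; exact h2 c hc⟩

lemma mem_char_cut {ξ : Fin G.nE → ℚ} :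
    ξ ∈ CharOf (1 : Matrix (Fin G.nE) (Fin G.nE) ℤ) G.cutSet ↔
      ξ ∈ G.Kc ∧ (∀ c ∈ G.cutSet, isInt (ξ ⬝ᵥ c)) ∧
        (∀ c ∈ G.cutSet, evenQ (ξ ⬝ᵥ c - c ⬝ᵥ c)) := by
  rw [mem_CharOf]
  constructor
  · rintro ⟨hd, h⟩
    obtain ⟨h1, h2⟩ := G.mem_dual_cut.1 hd
    refine ⟨h1, h2, fun c hc => ?_⟩
    obtain ⟨m, hm⟩ := h c hc
    rw [qform_one, qform_one] at hm
    exact ⟨m, hm⟩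
  · rintro ⟨h1, h2, h3⟩
    refine ⟨G.mem_dual_cut.2 ⟨h1, h2⟩, fun c hc => ?_⟩
    obtain ⟨m, hm⟩ := h3 c hc
    exact ⟨m, by rw [qform_one, qform_one]; exact hm⟩

lemma mem_char_flow {ξ : Fin G.nE → ℚ} :
    ξ ∈ CharOf (1 : Matrix (Fin G.nE) (Fin G.nE) ℤ) G.flowSet ↔
      ξ ∈ G.Kf ∧ (∀ f ∈ G.flowSet, isInt (ξ ⬝ᵥ f)) ∧
        (∀ f ∈ G.flowSet, evenQ (ξ ⬝ᵥ f - f ⬝ᵥ f)) := by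
  rw [mem_CharOf]
  constructor
  · rintro ⟨hd, h⟩
    obtain ⟨h1, h2⟩ := G.mem_dual_flow.1 hd
    refine ⟨h1, h2, fun c hc => ?_⟩
    obtain ⟨m, hm⟩ := h c hc
    rw [qform_one, qform_one] at hm
    exact ⟨m, hm⟩
  · rintro ⟨h1, h2, h3⟩
    refine ⟨G.mem_dual_flow.2 ⟨h1, h2⟩, fun c hc => ?_⟩
    obtain ⟨m, hm⟩ := h3 c hc
    exact ⟨m, by rw [qform_one, qform_one]; exact hm⟩

/-- vector of all ones -/
def oneVec (G : MultiGraph) : Fin G.nE → ℚ := fun _ => 1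

lemma sq_sub_self_even {c : Fin G.nE → ℚ} (hc : ∀ i, isInt (c i)) :
    evenQ (c ⬝ᵥ c - G.oneVec ⬝ᵥ c) := by
  unfold dotProduct oneVec
  rw [← Finset.sum_sub_distrib]
  refine evenQ_sum _ _ fun i _ => ?_
  obtain ⟨k, hk⟩ := hc i
  rw [hk]
  obtain ⟨t, ht⟩ := Int.even_mul_succ_self (k - 1)
  have htQ : ((k:ℚ) - 1) * ((k - 1) + 1) = t + t := by exact_mod_cast ht
  exact ⟨t, by push_cast; linarith [htQ]⟩

lemma exists_odd_lift_cut {ξ : Fin G.nE → ℚ}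
    (hξ : ξ ∈ CharOf (1 : Matrix (Fin G.nE) (Fin G.nE) ℤ) G.cutSet) :
    ∃ χ : Fin G.nE → ℚ, (∀ i, ∃ m : ℤ, χ i = 2*m+1) ∧ χ - ξ ∈ G.Kf := by
  obtain ⟨hKc, hint, heven⟩ := G.mem_char_cut.1 hξ
  obtain ⟨z, hzint, hzc, hzKf⟩ := G.cut_lift ξ hint
  have hu_even : ∀ c ∈ G.cutSet, evenQ ((z - G.oneVec) ⬝ᵥ c) := by
    intro c hc
    have h1 : z ⬝ᵥ c = ξ ⬝ᵥ c := hzc c hc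
    have h3 := G.sq_sub_self_even (c := c) (G.mem_cutSet_iff.1 hc).1
    have : (z - G.oneVec) ⬝ᵥ c = (ξ ⬝ᵥ c - c ⬝ᵥ c) + (c ⬝ᵥ c - G.oneVec ⬝ᵥ c) := by
      rw [sub_dotProduct, h1]; ring
    rw [this]
    exact evenQ_add (heven c hc) h3
  obtain ⟨f, hf, hpar⟩ := G.cut_parity (z - G.oneVec)
    (fun i => by rw [Pi.sub_apply]; exact isInt_sub' (hzint i) isInt_one) hu_even
  refine ⟨z - f, fun i => ?_, ?_⟩
  · obtain ⟨m, hm⟩ := hpar i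
    simp only [Pi.sub_apply] at hm
    refine ⟨m, ?_⟩
    simp only [Pi.sub_apply]
    have h1 : G.oneVec i = 1 := rfl
    rw [h1] at hm
    linarith
  · have : z - f - ξ = (z - ξ) - f := by abel
    rw [this]
    exact Submodule.sub_mem _ hzKf (G.mem_flowSet_iff.1 hf).2

lemma exists_odd_lift_flow {ξ : Fin G.nE → ℚ}
    (hξ : ξ ∈ CharOf (1 : Matrix (Fin G.nE) (Fin G.nE) ℤ) G.flowSet) :
    ∃ χ : Fin G.nE → ℚ, (∀ i, ∃ m : ℤ, χ i = 2*m+1) ∧ χ - ξ ∈ G.Kc := by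
  obtain ⟨hKf, hint, heven⟩ := G.mem_char_flow.1 hξ
  obtain ⟨z, hzint, hzc, hzKc⟩ := G.flow_lift ξ hint
  have hu_even : ∀ f ∈ G.flowSet, evenQ ((z - G.oneVec) ⬝ᵥ f) := by
    intro c hc
    have h1 : z ⬝ᵥ c = ξ ⬝ᵥ c := hzc c hc
    have h3 := G.sq_sub_self_even (c := c) (G.mem_flowSet_iff.1 hc).1
    have : (z - G.oneVec) ⬝ᵥ c = (ξ ⬝ᵥ c - c ⬝ᵥ c) + (c ⬝ᵥ c - G.oneVec ⬝ᵥ c) := by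
      rw [sub_dotProduct, h1]; ring
    rw [this]
    exact evenQ_add (heven c hc) h3
  obtain ⟨f, hf, hpar⟩ := G.flow_parity (z - G.oneVec)
    (fun i => by rw [Pi.sub_apply]; exact isInt_sub' (hzint i) isInt_one) hu_even
  refine ⟨z - f, fun i => ?_, ?_⟩
  · obtain ⟨m, hm⟩ := hpar i
    simp only [Pi.sub_apply] at hm
    refine ⟨m, ?_⟩
    simp only [Pi.sub_apply]
    have h1 : G.oneVec i = 1 := rfl
    rw [h1] at hm
    linarith
  · have : z - f - ξ = (z - ξ) - f := by abel
    rw [this]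
    exact Submodule.sub_mem _ hzKc (G.mem_cutSet_iff.1 hf).2

lemma half_mem_flowSet {w : Fin G.nE → ℚ} (hw : w ∈ G.Kf) (heven : ∀ i, evenQ (w i)) :
    ∃ f ∈ G.flowSet, w = (2:ℚ) • f := by
  refine ⟨(2:ℚ)⁻¹ • w, G.mem_flowSet_iff.2 ⟨fun i => ?_, Submodule.smul_mem _ _ hw⟩, by
    rw [smul_smul]; norm_num⟩
  obtain ⟨m, hm⟩ := heven i
  exact ⟨m, by rw [Pi.smul_apply, hm, smul_eq_mul]; ring⟩

lemma half_mem_cutSet {w : Fin G.nE → ℚ} (hw : w ∈ G.Kc) (heven : ∀ i, evenQ (w i)) :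
    ∃ c ∈ G.cutSet, w = (2:ℚ) • c := by
  refine ⟨(2:ℚ)⁻¹ • w, G.mem_cutSet_iff.2 ⟨fun i => ?_, Submodule.smul_mem _ _ hw⟩, by
    rw [smul_smul]; norm_num⟩
  obtain ⟨m, hm⟩ := heven i
  exact ⟨m, by rw [Pi.smul_apply, hm, smul_eq_mul]; ring⟩

lemma dot_decomp {c f : Fin G.nE → ℚ} (hc : c ∈ G.Kc) (hf : f ∈ G.Kf) :
    (c + f) ⬝ᵥ (c + f) = c ⬝ᵥ c + f ⬝ᵥ f := by
  have h1 : c ⬝ᵥ f = 0 := G.cut_flow_orth hc hf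
  have h2 : f ⬝ᵥ c = 0 := by rw [dotProduct_comm]; exact h1
  rw [add_dotProduct, dotProduct_add, dotProduct_add, h1, h2]
  ring

lemma odd_norm_ge {χ : Fin G.nE → ℚ} (hodd : ∀ i, ∃ m : ℤ, χ i = 2*m+1) :
    (G.nE : ℚ) ≤ χ ⬝ᵥ χ := by
  unfold dotProduct
  have : (G.nE : ℚ) = ∑ _i : Fin G.nE, (1:ℚ) := by
    rw [Finset.sum_const, Finset.card_univ, Fintype.card_fin, nsmul_eq_mul, mul_one]
  rw [this]
  refine Finset.sum_le_sum fun i _ => ?_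
  obtain ⟨m, hm⟩ := hodd i
  rw [hm]
  have : (1:ℤ) ≤ (2*m+1) * (2*m+1) := by
    rcases le_or_gt 0 m with h | h
    · nlinarith
    · nlinarith
  calc (1:ℚ) ≤ ((2*m+1) * (2*m+1) : ℤ) := by exact_mod_cast this
  _ = (2*(m:ℚ)+1) * (2*(m:ℚ)+1) := by push_cast; ring

lemma pm_one_norm {χ : Fin G.nE → ℚ} (h : ∀ i, χ i = 1 ∨ χ i = -1) :
    χ ⬝ᵥ χ = (G.nE : ℚ) := by
  unfold dotProduct
  have : ∀ i ∈ Finset.univ, χ i * χ i = (1:ℚ) := by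
    intro i _
    rcases h i with h | h <;> rw [h] <;> norm_num
  rw [Finset.sum_congr rfl this, Finset.sum_const, Finset.card_univ, Fintype.card_fin,
    nsmul_eq_mul, mul_one]

lemma pm_one_odd {χ : Fin G.nE → ℚ} (h : ∀ i, χ i = 1 ∨ χ i = -1) :
    ∀ i, ∃ m : ℤ, χ i = 2*m+1 := by
  intro i
  rcases h i with h | h
  · exact ⟨0, by rw [h]; norm_num⟩
  · exact ⟨-1, by rw [h]; norm_num⟩

lemma isInt_dot {x y : Fin G.nE → ℚ} (hx : ∀ i, isInt (x i)) (hy : ∀ i, isInt (y i)) :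
    isInt (x ⬝ᵥ y) :=
  isInt_sum' _ _ fun i _ => isInt_mul' (hx i) (hy i)

lemma exists_min_odd_lift (K : Submodule ℚ (Fin G.nE → ℚ)) (ξ : Fin G.nE → ℚ)
    (hex : ∃ χ : Fin G.nE → ℚ, (∀ i, ∃ m : ℤ, χ i = 2*m+1) ∧ χ - ξ ∈ K) :
    ∃ χ : Fin G.nE → ℚ, ((∀ i, ∃ m : ℤ, χ i = 2*m+1) ∧ χ - ξ ∈ K) ∧
      ∀ χ' : Fin G.nE → ℚ, (∀ i, ∃ m : ℤ, χ' i = 2*m+1) → χ' - ξ ∈ K → χ ⬝ᵥ χ ≤ χ' ⬝ᵥ χ' := by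
  classical
  have hnorm : ∀ χ : Fin G.nE → ℚ, (∀ i, ∃ m : ℤ, χ i = 2*m+1) →
      ∃ k : ℕ, χ ⬝ᵥ χ = (k : ℚ) := by
    intro χ hodd
    have hint : ∀ i, isInt (χ i) := fun i => by
      obtain ⟨m, hm⟩ := hodd i; exact ⟨2*m+1, by rw [hm]; push_cast; ring⟩
    obtain ⟨m, hm⟩ := G.isInt_dot hint hint
    have hnn : (0:ℚ) ≤ (m:ℚ) := hm ▸ dot_self_nonneg χ
    have : (0:ℤ) ≤ m := by exact_mod_cast hnn
    exact ⟨m.toNat, by rw [hm]; congr 1; omega⟩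
  have hS : ∃ k : ℕ, ∃ χ : Fin G.nE → ℚ, ((∀ i, ∃ m : ℤ, χ i = 2*m+1) ∧ χ - ξ ∈ K) ∧ χ ⬝ᵥ χ = (k : ℚ) := by
    obtain ⟨χ, h1, h2⟩ := hex
    obtain ⟨k, hk⟩ := hnorm χ h1
    exact ⟨k, χ, ⟨h1, h2⟩, hk⟩
  obtain ⟨χ, hχ, hval⟩ := Nat.find_spec hS
  refine ⟨χ, hχ, fun χ' h1 h2 => ?_⟩
  obtain ⟨k', hk'⟩ := hnorm χ' h1
  have : Nat.find hS ≤ k' := Nat.find_min' hS ⟨χ', ⟨h1, h2⟩, hk'⟩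
  rw [hval, hk']
  exact_mod_cast this

lemma dot_sub_two_smul (a b : Fin G.nE → ℚ) :
    (a - (2:ℚ) • b) ⬝ᵥ (a - (2:ℚ) • b) = a ⬝ᵥ a - 4 * (a ⬝ᵥ b) + 4 * (b ⬝ᵥ b) := by
  have hc := dotProduct_comm a b
  rw [sub_dotProduct, dotProduct_sub, dotProduct_sub, smul_dotProduct, smul_dotProduct,
    dotProduct_smul, dotProduct_smul, hc]
  simp only [smul_eq_mul]
  ring

lemma cut_restrict_eq {χ ξ : Fin G.nE → ℚ} (h : χ - ξ ∈ G.Kf) {c : Fin G.nE → ℚ}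
    (hc : c ∈ G.cutSet) : χ ⬝ᵥ c = ξ ⬝ᵥ c := by
  have := G.cut_flow_orth (G.mem_cutSet_iff.1 hc).2 h
  rw [dotProduct_comm] at this
  rw [sub_dotProduct] at this
  linarith

lemma flow_restrict_eq {χ ξ : Fin G.nE → ℚ} (h : χ - ξ ∈ G.Kc) {f : Fin G.nE → ℚ}
    (hf : f ∈ G.flowSet) : χ ⬝ᵥ f = ξ ⬝ᵥ f := by
  have := G.cut_flow_orth h (G.mem_flowSet_iff.1 hf).2
  rw [sub_dotProduct] at this
  linarith

lemma odd_not_pm_big {q : ℚ} (hodd : ∃ m : ℤ, q = 2*m+1) (h1 : q ≠ 1) (h2 : q ≠ -1) :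
    3 ≤ |q| := by
  obtain ⟨m, rfl⟩ := hodd
  have hm1 : m ≠ 0 := fun h => h1 (by rw [h]; norm_num)
  have hm2 : m ≠ -1 := fun h => h2 (by rw [h]; norm_num)
  have : (3:ℤ) ≤ |2*m+1| := by
    rcases le_or_gt 0 (2*m+1) with h | h
    · rw [abs_of_nonneg h]; omega
    · rw [abs_of_neg h]; omega
  calc (3:ℚ) ≤ ((|2*m+1| : ℤ) : ℚ) := by exact_mod_cast this
  _ = |((2*m+1 : ℤ) : ℚ)| := by rw [Int.cast_abs]
  _ = |2*(m:ℚ)+1| := by push_cast; ring_nf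

lemma short_cut_lift {ξ : Fin G.nE → ℚ}
    (hξ : ξ ∈ ShortOf (1 : Matrix (Fin G.nE) (Fin G.nE) ℤ) G.cutSet) :
    ∃ ε : Fin G.nE → ℚ, (∀ i, ε i = 1 ∨ ε i = -1) ∧ ε - ξ ∈ G.Kf := by
  obtain ⟨hchar, hshort⟩ := hξ
  obtain ⟨χ₀, hχ₀odd, hχ₀lift⟩ := G.exists_odd_lift_cut hchar
  obtain ⟨ε, ⟨hodd, hlift⟩, hmin⟩ := G.exists_min_odd_lift G.Kf ξ ⟨χ₀, hχ₀odd, hχ₀lift⟩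
  refine ⟨ε, fun i => ?_, hlift⟩
  by_contra hbad
  push_neg at hbad
  have hbig : 3 ≤ |ε i| := odd_not_pm_big (hodd i) hbad.1 hbad.2
  rcases core_dichotomy hodd i hbig with ⟨f, hf, hlt⟩ | ⟨c, hc, hlt⟩
  · -- flow improvement contradicts minimality
    have hodd' : ∀ j, ∃ m : ℤ, (ε - (2:ℚ) • f) j = 2*m+1 := by
      intro j
      obtain ⟨m, hm⟩ := hodd j
      obtain ⟨k, hk⟩ := (G.mem_flowSet_iff.1 hf).1 j
      exact ⟨m - k, by rw [Pi.sub_apply, Pi.smul_apply, hm, hk, smul_eq_mul]; push_cast; ring⟩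
    have hlift' : (ε - (2:ℚ) • f) - ξ ∈ G.Kf := by
      have : (ε - (2:ℚ) • f) - ξ = (ε - ξ) - (2:ℚ) • f := by abel
      rw [this]
      exact Submodule.sub_mem _ hlift (Submodule.smul_mem _ _ (G.mem_flowSet_iff.1 hf).2)
    have := hmin _ hodd' hlift'
    rw [G.dot_sub_two_smul] at this
    have hεf : ε ⬝ᵥ f > f ⬝ᵥ f := hlt
    linarith
  · -- cut improvement contradicts shortness of ξ
    have hξc : ξ ⬝ᵥ c = ε ⬝ᵥ c := (G.cut_restrict_eq hlift hc).symm
    set ξ' : Fin G.nE → ℚ := ξ - (2:ℚ) • c with hξ'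
    have hξ'char : ξ' ∈ CharOf (1 : Matrix (Fin G.nE) (Fin G.nE) ℤ) G.cutSet := by
      obtain ⟨h1, h2, h3⟩ := G.mem_char_cut.1 hchar
      refine G.mem_char_cut.2 ⟨?_, fun c' hc' => ?_, fun c' hc' => ?_⟩
      · exact Submodule.sub_mem _ h1 (Submodule.smul_mem _ _ (G.mem_cutSet_iff.1 hc).2)
      · rw [hξ', sub_dotProduct, smul_dotProduct]
        refine isInt_sub' (h2 c' hc') ?_
        rw [smul_eq_mul]
        exact isInt_mul' ⟨2, by norm_num⟩
          (G.isInt_dot (G.mem_cutSet_iff.1 hc).1 (G.mem_cutSet_iff.1 hc').1)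
      · rw [hξ', sub_dotProduct, smul_dotProduct, smul_eq_mul]
        have heq : ξ ⬝ᵥ c' - 2 * (c ⬝ᵥ c') - c' ⬝ᵥ c' =
            (ξ ⬝ᵥ c' - c' ⬝ᵥ c') + (-(2 * (c ⬝ᵥ c'))) := by ring
        rw [heq]
        refine evenQ_add (h3 c' hc') ?_
        obtain ⟨m, hm⟩ := G.isInt_dot (G.mem_cutSet_iff.1 hc).1 (G.mem_cutSet_iff.1 hc').1
        exact ⟨-m, by rw [hm]; push_cast; ring⟩
    have hsame : SameClass G.cutSet ξ ξ' :=
      ⟨-c, G.cutSet_neg hc, by rw [hξ', smul_neg]; abel⟩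
    have := hshort ξ' hξ'char hsame
    rw [qform_one, qform_one, hξ', G.dot_sub_two_smul] at this
    rw [hξc] at this
    linarith

lemma short_flow_lift {ξ : Fin G.nE → ℚ}
    (hξ : ξ ∈ ShortOf (1 : Matrix (Fin G.nE) (Fin G.nE) ℤ) G.flowSet) :
    ∃ ε : Fin G.nE → ℚ, (∀ i, ε i = 1 ∨ ε i = -1) ∧ ε - ξ ∈ G.Kc := by
  obtain ⟨hchar, hshort⟩ := hξ
  obtain ⟨χ₀, hχ₀odd, hχ₀lift⟩ := G.exists_odd_lift_flow hchar
  obtain ⟨ε, ⟨hodd, hlift⟩, hmin⟩ := G.exists_min_odd_lift G.Kc ξ ⟨χ₀, hχ₀odd, hχ₀lift⟩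
  refine ⟨ε, fun i => ?_, hlift⟩
  by_contra hbad
  push_neg at hbad
  have hbig : 3 ≤ |ε i| := odd_not_pm_big (hodd i) hbad.1 hbad.2
  rcases core_dichotomy hodd i hbig with ⟨f, hf, hlt⟩ | ⟨c, hc, hlt⟩
  · -- flow improvement contradicts shortness of ξ
    have hξf : ξ ⬝ᵥ f = ε ⬝ᵥ f := (G.flow_restrict_eq hlift hf).symm
    set ξ' : Fin G.nE → ℚ := ξ - (2:ℚ) • f with hξ'
    have hξ'char : ξ' ∈ CharOf (1 : Matrix (Fin G.nE) (Fin G.nE) ℤ) G.flowSet := by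
      obtain ⟨h1, h2, h3⟩ := G.mem_char_flow.1 hchar
      refine G.mem_char_flow.2 ⟨?_, fun c' hc' => ?_, fun c' hc' => ?_⟩
      · exact Submodule.sub_mem _ h1 (Submodule.smul_mem _ _ (G.mem_flowSet_iff.1 hf).2)
      · rw [hξ', sub_dotProduct, smul_dotProduct]
        refine isInt_sub' (h2 c' hc') ?_
        rw [smul_eq_mul]
        exact isInt_mul' ⟨2, by norm_num⟩
          (G.isInt_dot (G.mem_flowSet_iff.1 hf).1 (G.mem_flowSet_iff.1 hc').1)
      · rw [hξ', sub_dotProduct, smul_dotProduct, smul_eq_mul]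
        have heq : ξ ⬝ᵥ c' - 2 * (f ⬝ᵥ c') - c' ⬝ᵥ c' =
            (ξ ⬝ᵥ c' - c' ⬝ᵥ c') + (-(2 * (f ⬝ᵥ c'))) := by ring
        rw [heq]
        refine evenQ_add (h3 c' hc') ?_
        obtain ⟨m, hm⟩ := G.isInt_dot (G.mem_flowSet_iff.1 hf).1 (G.mem_flowSet_iff.1 hc').1
        exact ⟨-m, by rw [hm]; push_cast; ring⟩
    have hsame : SameClass G.flowSet ξ ξ' :=
      ⟨-f, G.flowSet_neg hf, by rw [hξ', smul_neg]; abel⟩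
    have := hshort ξ' hξ'char hsame
    rw [qform_one, qform_one, hξ', G.dot_sub_two_smul] at this
    rw [hξf] at this
    linarith
  · -- cut improvement contradicts minimality
    have hodd' : ∀ j, ∃ m : ℤ, (ε - (2:ℚ) • c) j = 2*m+1 := by
      intro j
      obtain ⟨m, hm⟩ := hodd j
      obtain ⟨k, hk⟩ := (G.mem_cutSet_iff.1 hc).1 j
      exact ⟨m - k, by rw [Pi.sub_apply, Pi.smul_apply, hm, hk, smul_eq_mul]; push_cast; ring⟩
    have hlift' : (ε - (2:ℚ) • c) - ξ ∈ G.Kc := by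
      have : (ε - (2:ℚ) • c) - ξ = (ε - ξ) - (2:ℚ) • c := by abel
      rw [this]
      exact Submodule.sub_mem _ hlift (Submodule.smul_mem _ _ (G.mem_cutSet_iff.1 hc).2)
    have := hmin _ hodd' hlift'
    rw [G.dot_sub_two_smul] at this
    linarith

lemma Kc_inf_Kf_zero {a : Fin G.nE → ℚ} (ha : a ∈ G.Kc) (hf : a ∈ G.Kf) : a = 0 :=
  dot_self_eq_zero (G.cut_flow_orth ha hf)

lemma finrank_Kc_add_Kf : Module.finrank ℚ G.Kc + Module.finrank ℚ G.Kf = G.nE := by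
  have hrank : G.Dmatᵀ.rank = G.Dmat.rank := Matrix.rank_transpose _
  have h1 : Module.finrank ℚ G.Kc = G.Dmat.rank := hrank
  have h2 : G.Dmat.rank + Module.finrank ℚ G.Kf = G.nE := by
    have := LinearMap.finrank_range_add_finrank_ker G.Dmat.mulVecLin
    rwa [Module.finrank_pi, Fintype.card_fin] at this
  omega

lemma rkOf_sum : rkOf G.cutSet + rkOf G.flowSet = G.nE := by
  unfold rkOf
  rw [G.span_cutSet, G.span_flowSet]
  exact G.finrank_Kc_add_Kf

lemma cutSet_subset_dual {c : Fin G.nE → ℚ} (hc : c ∈ G.cutSet) :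
    c ∈ dualOf (1 : Matrix (Fin G.nE) (Fin G.nE) ℤ) G.cutSet :=
  G.mem_dual_cut.2 ⟨(G.mem_cutSet_iff.1 hc).2, fun c' hc' =>
    G.isInt_dot (G.mem_cutSet_iff.1 hc).1 (G.mem_cutSet_iff.1 hc').1⟩

lemma flowSet_subset_dual {f : Fin G.nE → ℚ} (hf : f ∈ G.flowSet) :
    f ∈ dualOf (1 : Matrix (Fin G.nE) (Fin G.nE) ℤ) G.flowSet :=
  G.mem_dual_flow.2 ⟨(G.mem_flowSet_iff.1 hf).2, fun c' hc' =>
    G.isInt_dot (G.mem_flowSet_iff.1 hf).1 (G.mem_flowSet_iff.1 hc').1⟩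

/-- The sublattice of the dual, as a subgroup (cut side). -/
def cutIn (G : MultiGraph) : AddSubgroup (dualOf (1 : Matrix (Fin G.nE) (Fin G.nE) ℤ) G.cutSet) where
  carrier := {x | (x : Fin G.nE → ℚ) ∈ G.cutSet}
  zero_mem' := G.cutSet_zero
  add_mem' := fun ha hb => G.cutSet_add ha hb
  neg_mem' := fun ha => G.cutSet_neg ha

/-- The sublattice of the dual, as a subgroup (flow side). -/
def flowIn (G : MultiGraph) : AddSubgroup (dualOf (1 : Matrix (Fin G.nE) (Fin G.nE) ℤ) G.flowSet) where
  carrier := {x | (x : Fin G.nE → ℚ) ∈ G.flowSet}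
  zero_mem' := G.flowSet_zero
  add_mem' := fun ha hb => G.flowSet_add ha hb
  neg_mem' := fun ha => G.flowSet_neg ha

lemma latIn_cut_eq : latIn (1 : Matrix (Fin G.nE) (Fin G.nE) ℤ) G.cutSet = G.cutIn := by
  apply le_antisymm
  · exact AddSubgroup.closure_le _ |>.2 fun x hx => hx
  · intro x hx
    exact AddSubgroup.subset_closure hx

lemma latIn_flow_eq : latIn (1 : Matrix (Fin G.nE) (Fin G.nE) ℤ) G.flowSet = G.flowIn := by
  apply le_antisymm
  · exact AddSubgroup.closure_le _ |>.2 fun x hx => hx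
  · intro x hx
    exact AddSubgroup.subset_closure hx

lemma mem_latIn_cut {x : dualOf (1 : Matrix (Fin G.nE) (Fin G.nE) ℤ) G.cutSet} :
    x ∈ latIn (1 : Matrix (Fin G.nE) (Fin G.nE) ℤ) G.cutSet ↔
      (x : Fin G.nE → ℚ) ∈ G.cutSet := by
  rw [G.latIn_cut_eq]; exact Iff.rfl

lemma mem_latIn_flow {x : dualOf (1 : Matrix (Fin G.nE) (Fin G.nE) ℤ) G.flowSet} :
    x ∈ latIn (1 : Matrix (Fin G.nE) (Fin G.nE) ℤ) G.flowSet ↔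
      (x : Fin G.nE → ℚ) ∈ G.flowSet := by
  rw [G.latIn_flow_eq]; exact Iff.rfl

lemma dmk_eq_flow {a b : Fin G.nE → ℚ}
    (ha : a ∈ dualOf (1 : Matrix (Fin G.nE) (Fin G.nE) ℤ) G.flowSet)
    (hb : b ∈ dualOf (1 : Matrix (Fin G.nE) (Fin G.nE) ℤ) G.flowSet)
    (h : a - b ∈ G.flowSet) :
    dmk (1 : Matrix (Fin G.nE) (Fin G.nE) ℤ) G.flowSet ha = dmk _ _ hb := by
  unfold dmk
  erw [QuotientAddGroup.eq]
  rw [G.mem_latIn_flow]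
  show -a + b ∈ G.flowSet
  have : -a + b = -(a - b) := by abel
  rw [this]
  exact G.flowSet_neg h

lemma dmk_eq_cut {a b : Fin G.nE → ℚ}
    (ha : a ∈ dualOf (1 : Matrix (Fin G.nE) (Fin G.nE) ℤ) G.cutSet)
    (hb : b ∈ dualOf (1 : Matrix (Fin G.nE) (Fin G.nE) ℤ) G.cutSet)
    (h : a - b ∈ G.cutSet) :
    dmk (1 : Matrix (Fin G.nE) (Fin G.nE) ℤ) G.cutSet ha = dmk _ _ hb := by
  unfold dmk
  erw [QuotientAddGroup.eq]
  rw [G.mem_latIn_cut]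
  show -a + b ∈ G.cutSet
  have : -a + b = -(a - b) := by abel
  rw [this]
  exact G.cutSet_neg h

open Classical in
/-- A choice of integral lift for a dual-of-cut vector. -/
noncomputable def cutLiftV (G : MultiGraph) (x : Fin G.nE → ℚ) : Fin G.nE → ℚ :=
  if h : ∀ c ∈ G.cutSet, isInt (x ⬝ᵥ c) then Classical.choose (G.cut_lift x h) else 0

lemma cutLiftV_spec {x : Fin G.nE → ℚ} (h : ∀ c ∈ G.cutSet, isInt (x ⬝ᵥ c)) :
    (∀ i, isInt (G.cutLiftV x i)) ∧ (∀ c ∈ G.cutSet, G.cutLiftV x ⬝ᵥ c = x ⬝ᵥ c) ∧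
      G.cutLiftV x - x ∈ G.Kf := by
  unfold cutLiftV
  rw [dif_pos h]
  exact Classical.choose_spec (G.cut_lift x h)

open Classical in
/-- A choice of integral lift for a dual-of-flow vector. -/
noncomputable def flowLiftV (G : MultiGraph) (x : Fin G.nE → ℚ) : Fin G.nE → ℚ :=
  if h : ∀ f ∈ G.flowSet, isInt (x ⬝ᵥ f) then Classical.choose (G.flow_lift x h) else 0

lemma flowLiftV_spec {x : Fin G.nE → ℚ} (h : ∀ f ∈ G.flowSet, isInt (x ⬝ᵥ f)) :
    (∀ i, isInt (G.flowLiftV x i)) ∧ (∀ f ∈ G.flowSet, G.flowLiftV x ⬝ᵥ f = x ⬝ᵥ f) ∧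
      G.flowLiftV x - x ∈ G.Kc := by
  unfold flowLiftV
  rw [dif_pos h]
  exact Classical.choose_spec (G.flow_lift x h)

lemma toFlow_mem {x : Fin G.nE → ℚ}
    (hx : x ∈ dualOf (1 : Matrix (Fin G.nE) (Fin G.nE) ℤ) G.cutSet) :
    G.cutLiftV x - x ∈ dualOf (1 : Matrix (Fin G.nE) (Fin G.nE) ℤ) G.flowSet := by
  obtain ⟨hKc, hint⟩ := G.mem_dual_cut.1 hx
  obtain ⟨hz1, hz2, hz3⟩ := G.cutLiftV_spec hint
  refine G.mem_dual_flow.2 ⟨hz3, fun f hf => ?_⟩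
  have h0 : x ⬝ᵥ f = 0 := G.cut_flow_orth hKc (G.mem_flowSet_iff.1 hf).2
  rw [sub_dotProduct, h0, sub_zero]
  exact G.isInt_dot hz1 (G.mem_flowSet_iff.1 hf).1

lemma toCut_mem {x : Fin G.nE → ℚ}
    (hx : x ∈ dualOf (1 : Matrix (Fin G.nE) (Fin G.nE) ℤ) G.flowSet) :
    G.flowLiftV x - x ∈ dualOf (1 : Matrix (Fin G.nE) (Fin G.nE) ℤ) G.cutSet := by
  obtain ⟨hKf, hint⟩ := G.mem_dual_flow.1 hx
  obtain ⟨hz1, hz2, hz3⟩ := G.flowLiftV_spec hint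
  refine G.mem_dual_cut.2 ⟨hz3, fun f hf => ?_⟩
  have h0 : x ⬝ᵥ f = 0 := by
    rw [dotProduct_comm]
    exact G.cut_flow_orth (G.mem_cutSet_iff.1 hf).2 hKf
  rw [sub_dotProduct, h0, sub_zero]
  exact G.isInt_dot hz1 (G.mem_cutSet_iff.1 hf).1

/-- The glue homomorphism from the cut dual to the flow discriminant group. -/
noncomputable def psi0 (G : MultiGraph) :
    dualOf (1 : Matrix (Fin G.nE) (Fin G.nE) ℤ) G.cutSet →+
      disc (1 : Matrix (Fin G.nE) (Fin G.nE) ℤ) G.flowSet :=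
  AddMonoidHom.mk' (fun x => dmk _ _ (G.toFlow_mem x.2)) (by
    intro a b
    have hmk : ∀ (u v : dualOf (1 : Matrix (Fin G.nE) (Fin G.nE) ℤ) G.flowSet),
        (QuotientAddGroup.mk u + QuotientAddGroup.mk v :
          disc (1 : Matrix (Fin G.nE) (Fin G.nE) ℤ) G.flowSet) = QuotientAddGroup.mk (u + v) :=
      fun u v => rfl
    show dmk _ _ (G.toFlow_mem (a + b).2) =
      dmk _ _ (G.toFlow_mem a.2) + dmk _ _ (G.toFlow_mem b.2)
    unfold dmk
    erw [hmk]
    erw [QuotientAddGroup.eq]; rw [G.mem_latIn_flow]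
    show -(G.cutLiftV ↑(a+b) - ↑(a+b)) + ((G.cutLiftV ↑a - ↑a) + (G.cutLiftV ↑b - ↑b)) ∈
      G.flowSet
    obtain ⟨ha1, ha2, ha3⟩ := G.cutLiftV_spec (G.mem_dual_cut.1 a.2).2
    obtain ⟨hb1, hb2, hb3⟩ := G.cutLiftV_spec (G.mem_dual_cut.1 b.2).2
    obtain ⟨hab1, hab2, hab3⟩ := G.cutLiftV_spec (G.mem_dual_cut.1 (a+b).2).2
    have hco : ((a + b : dualOf _ _) : Fin G.nE → ℚ) = (a : Fin G.nE → ℚ) + b := rfl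
    rw [G.mem_flowSet_iff]
    constructor
    · intro i
      have : (-(G.cutLiftV ↑(a+b) - ↑(a+b)) + ((G.cutLiftV ↑a - ↑a) + (G.cutLiftV ↑b - ↑b))) i
          = -(G.cutLiftV (↑(a+b)) i) + G.cutLiftV (↑a) i + G.cutLiftV (↑b) i := by
        simp only [Pi.add_apply, Pi.neg_apply, Pi.sub_apply, hco]
        ring
      rw [this]
      exact isInt_add' (isInt_add' (isInt_neg' (hab1 i)) (ha1 i)) (hb1 i)
    · refine Submodule.add_mem _ (Submodule.neg_mem _ hab3) (Submodule.add_mem _ ?_ ?_)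
      · exact ha3
      · exact hb3)

/-- The glue homomorphism from the flow dual to the cut discriminant group. -/
noncomputable def phi0 (G : MultiGraph) :
    dualOf (1 : Matrix (Fin G.nE) (Fin G.nE) ℤ) G.flowSet →+
      disc (1 : Matrix (Fin G.nE) (Fin G.nE) ℤ) G.cutSet :=
  AddMonoidHom.mk' (fun x => dmk _ _ (G.toCut_mem x.2)) (by
    intro a b
    have hmk : ∀ (u v : dualOf (1 : Matrix (Fin G.nE) (Fin G.nE) ℤ) G.cutSet),
        (QuotientAddGroup.mk u + QuotientAddGroup.mk v :
          disc (1 : Matrix (Fin G.nE) (Fin G.nE) ℤ) G.cutSet) = QuotientAddGroup.mk (u + v) :=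
      fun u v => rfl
    show dmk _ _ (G.toCut_mem (a + b).2) =
      dmk _ _ (G.toCut_mem a.2) + dmk _ _ (G.toCut_mem b.2)
    unfold dmk
    erw [hmk]
    erw [QuotientAddGroup.eq]; rw [G.mem_latIn_cut]
    show -(G.flowLiftV ↑(a+b) - ↑(a+b)) + ((G.flowLiftV ↑a - ↑a) + (G.flowLiftV ↑b - ↑b)) ∈
      G.cutSet
    obtain ⟨ha1, ha2, ha3⟩ := G.flowLiftV_spec (G.mem_dual_flow.1 a.2).2
    obtain ⟨hb1, hb2, hb3⟩ := G.flowLiftV_spec (G.mem_dual_flow.1 b.2).2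
    obtain ⟨hab1, hab2, hab3⟩ := G.flowLiftV_spec (G.mem_dual_flow.1 (a+b).2).2
    have hco : ((a + b : dualOf _ _) : Fin G.nE → ℚ) = (a : Fin G.nE → ℚ) + b := rfl
    rw [G.mem_cutSet_iff]
    constructor
    · intro i
      have : (-(G.flowLiftV ↑(a+b) - ↑(a+b)) + ((G.flowLiftV ↑a - ↑a) + (G.flowLiftV ↑b - ↑b))) i
          = -(G.flowLiftV (↑(a+b)) i) + G.flowLiftV (↑a) i + G.flowLiftV (↑b) i := by
        simp only [Pi.add_apply, Pi.neg_apply, Pi.sub_apply, hco]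
        ring
      rw [this]
      exact isInt_add' (isInt_add' (isInt_neg' (hab1 i)) (ha1 i)) (hb1 i)
    · refine Submodule.add_mem _ (Submodule.neg_mem _ hab3) (Submodule.add_mem _ ?_ ?_)
      · exact ha3
      · exact hb3)

lemma psi0_ker (x : dualOf (1 : Matrix (Fin G.nE) (Fin G.nE) ℤ) G.cutSet)
    (hx : x ∈ latIn (1 : Matrix (Fin G.nE) (Fin G.nE) ℤ) G.cutSet) : G.psi0 x = 0 := by
  rw [G.mem_latIn_cut] at hx
  show dmk _ _ (G.toFlow_mem x.2) = 0
  unfold dmk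
  erw [QuotientAddGroup.eq_zero_iff, G.mem_latIn_flow]
  show G.cutLiftV ↑x - ↑x ∈ G.flowSet
  obtain ⟨h1, h2, h3⟩ := G.cutLiftV_spec (G.mem_dual_cut.1 x.2).2
  exact G.mem_flowSet_iff.2 ⟨fun i => by
    rw [Pi.sub_apply]; exact isInt_sub' (h1 i) ((G.mem_cutSet_iff.1 hx).1 i), h3⟩

lemma phi0_ker (x : dualOf (1 : Matrix (Fin G.nE) (Fin G.nE) ℤ) G.flowSet)
    (hx : x ∈ latIn (1 : Matrix (Fin G.nE) (Fin G.nE) ℤ) G.flowSet) : G.phi0 x = 0 := by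
  rw [G.mem_latIn_flow] at hx
  show dmk _ _ (G.toCut_mem x.2) = 0
  unfold dmk
  erw [QuotientAddGroup.eq_zero_iff, G.mem_latIn_cut]
  show G.flowLiftV ↑x - ↑x ∈ G.cutSet
  obtain ⟨h1, h2, h3⟩ := G.flowLiftV_spec (G.mem_dual_flow.1 x.2).2
  exact G.mem_cutSet_iff.2 ⟨fun i => by
    rw [Pi.sub_apply]; exact isInt_sub' (h1 i) ((G.mem_flowSet_iff.1 hx).1 i), h3⟩

/-- The induced map on discriminant groups (cut to flow). -/
noncomputable def psiHat (G : MultiGraph) :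
    disc (1 : Matrix (Fin G.nE) (Fin G.nE) ℤ) G.cutSet →+
      disc (1 : Matrix (Fin G.nE) (Fin G.nE) ℤ) G.flowSet :=
  QuotientAddGroup.lift _ G.psi0 G.psi0_ker

/-- The induced map on discriminant groups (flow to cut). -/
noncomputable def phiHat (G : MultiGraph) :
    disc (1 : Matrix (Fin G.nE) (Fin G.nE) ℤ) G.flowSet →+
      disc (1 : Matrix (Fin G.nE) (Fin G.nE) ℤ) G.cutSet :=
  QuotientAddGroup.lift _ G.phi0 G.phi0_ker

lemma phiHat_psiHat (q : disc (1 : Matrix (Fin G.nE) (Fin G.nE) ℤ) G.cutSet) :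
    G.phiHat (G.psiHat q) = q := by
  refine QuotientAddGroup.induction_on q ?_
  intro x
  show G.phiHat (G.psi0 x) = QuotientAddGroup.mk x
  show G.phiHat (dmk _ _ (G.toFlow_mem x.2)) = QuotientAddGroup.mk x
  unfold dmk
  show G.phi0 ⟨G.cutLiftV ↑x - ↑x, G.toFlow_mem x.2⟩ = QuotientAddGroup.mk x
  show dmk _ _ (G.toCut_mem (G.toFlow_mem x.2)) = QuotientAddGroup.mk x
  unfold dmk
  erw [QuotientAddGroup.eq, G.mem_latIn_cut]
  show -(G.flowLiftV (G.cutLiftV ↑x - ↑x) - (G.cutLiftV ↑x - ↑x)) + ↑x ∈ G.cutSet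
  obtain ⟨h1, h2, h3⟩ := G.cutLiftV_spec (G.mem_dual_cut.1 x.2).2
  obtain ⟨h1', h2', h3'⟩ := G.flowLiftV_spec (G.mem_dual_flow.1 (G.toFlow_mem x.2)).2
  rw [G.mem_cutSet_iff]
  constructor
  · intro i
    have : (-(G.flowLiftV (G.cutLiftV ↑x - ↑x) - (G.cutLiftV ↑x - ↑x)) + ↑x) i
        = -(G.flowLiftV (G.cutLiftV ↑x - ↑x) i) + G.cutLiftV (↑x) i := by
      simp only [Pi.add_apply, Pi.neg_apply, Pi.sub_apply]
      ring
    rw [this]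
    exact isInt_add' (isInt_neg' (h1' i)) (h1 i)
  · have hx' : (-(G.flowLiftV (G.cutLiftV ↑x - ↑x) - (G.cutLiftV ↑x - ↑x)) + ↑x)
        = -(G.flowLiftV (G.cutLiftV ↑x - ↑x) - (G.cutLiftV ↑x - ↑x)) + (↑x : Fin G.nE → ℚ) := rfl
    have hmem1 : G.flowLiftV (G.cutLiftV ↑x - ↑x) - (G.cutLiftV ↑x - ↑x) ∈ G.Kc := h3'
    have hmem2 : (↑x : Fin G.nE → ℚ) ∈ G.Kc := (G.mem_dual_cut.1 x.2).1
    exact Submodule.add_mem _ (Submodule.neg_mem _ hmem1) hmem2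

lemma psiHat_phiHat (q : disc (1 : Matrix (Fin G.nE) (Fin G.nE) ℤ) G.flowSet) :
    G.psiHat (G.phiHat q) = q := by
  refine QuotientAddGroup.induction_on q ?_
  intro x
  show G.psiHat (G.phi0 x) = QuotientAddGroup.mk x
  show G.psiHat (dmk _ _ (G.toCut_mem x.2)) = QuotientAddGroup.mk x
  unfold dmk
  show G.psi0 ⟨G.flowLiftV ↑x - ↑x, G.toCut_mem x.2⟩ = QuotientAddGroup.mk x
  show dmk _ _ (G.toFlow_mem (G.toCut_mem x.2)) = QuotientAddGroup.mk x
  unfold dmk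
  erw [QuotientAddGroup.eq, G.mem_latIn_flow]
  show -(G.cutLiftV (G.flowLiftV ↑x - ↑x) - (G.flowLiftV ↑x - ↑x)) + ↑x ∈ G.flowSet
  obtain ⟨h1, h2, h3⟩ := G.flowLiftV_spec (G.mem_dual_flow.1 x.2).2
  obtain ⟨h1', h2', h3'⟩ := G.cutLiftV_spec (G.mem_dual_cut.1 (G.toCut_mem x.2)).2
  rw [G.mem_flowSet_iff]
  constructor
  · intro i
    have : (-(G.cutLiftV (G.flowLiftV ↑x - ↑x) - (G.flowLiftV ↑x - ↑x)) + ↑x) i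
        = -(G.cutLiftV (G.flowLiftV ↑x - ↑x) i) + G.flowLiftV (↑x) i := by
      simp only [Pi.add_apply, Pi.neg_apply, Pi.sub_apply]
      ring
    rw [this]
    exact isInt_add' (isInt_neg' (h1' i)) (h1 i)
  · have hmem1 : G.cutLiftV (G.flowLiftV ↑x - ↑x) - (G.flowLiftV ↑x - ↑x) ∈ G.Kf := h3'
    have hmem2 : (↑x : Fin G.nE → ℚ) ∈ G.Kf := (G.mem_dual_flow.1 x.2).1
    exact Submodule.add_mem _ (Submodule.neg_mem _ hmem1) hmem2

/-- The glue isomorphism of discriminant groups. -/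
noncomputable def psiEquiv (G : MultiGraph) :
    disc (1 : Matrix (Fin G.nE) (Fin G.nE) ℤ) G.cutSet ≃+
      disc (1 : Matrix (Fin G.nE) (Fin G.nE) ℤ) G.flowSet where
  toFun := G.psiHat
  invFun := G.phiHat
  left_inv := G.phiHat_psiHat
  right_inv := G.psiHat_phiHat
  map_add' := G.psiHat.map_add

lemma psiEquiv_dmk {x : Fin G.nE → ℚ}
    (hx : x ∈ dualOf (1 : Matrix (Fin G.nE) (Fin G.nE) ℤ) G.cutSet) :
    G.psiEquiv (dmk _ _ hx) = dmk _ _ (G.toFlow_mem hx) := by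
  show G.psiHat (QuotientAddGroup.mk ⟨x, hx⟩) = _
  show G.psi0 ⟨x, hx⟩ = _
  rfl

open Classical in
/-- The map `Φ`, sending a characteristic covector of the cut lattice to (a representative of)
the corresponding characteristic covector of the flow lattice. -/
noncomputable def PhiMap (G : MultiGraph) (ξ : Fin G.nE → ℚ) : Fin G.nE → ℚ :=
  if h : ∃ χ : Fin G.nE → ℚ, (∀ i, ∃ m : ℤ, χ i = 2*m+1) ∧ χ - ξ ∈ G.Kf
  then Classical.choose h - ξ else 0

lemma PhiMap_spec {ξ : Fin G.nE → ℚ}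
    (hξ : ξ ∈ CharOf (1 : Matrix (Fin G.nE) (Fin G.nE) ℤ) G.cutSet) :
    ∃ χ : Fin G.nE → ℚ, (∀ i, ∃ m : ℤ, χ i = 2*m+1) ∧ χ - ξ ∈ G.Kf ∧
      G.PhiMap ξ = χ - ξ := by
  have h : ∃ χ : Fin G.nE → ℚ, (∀ i, ∃ m : ℤ, χ i = 2*m+1) ∧ χ - ξ ∈ G.Kf :=
    G.exists_odd_lift_cut hξ
  obtain ⟨h1, h2⟩ := Classical.choose_spec h
  exact ⟨Classical.choose h, h1, h2, by unfold PhiMap; rw [dif_pos h]⟩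

lemma lift_flow_char {ξ χ : Fin G.nE → ℚ} (hχ : ∀ i, ∃ m : ℤ, χ i = 2*m+1)
    (hξKc : ξ ∈ G.Kc) (hl : χ - ξ ∈ G.Kf) :
    χ - ξ ∈ CharOf (1 : Matrix (Fin G.nE) (Fin G.nE) ℤ) G.flowSet := by
  have hχint : ∀ i, isInt (χ i) := fun i => by
    obtain ⟨m, hm⟩ := hχ i; exact ⟨2*m+1, by rw [hm]; push_cast; ring⟩
  refine G.mem_char_flow.2 ⟨hl, fun f hf => ?_, fun f hf => ?_⟩
  · have h0 : ξ ⬝ᵥ f = 0 := G.cut_flow_orth hξKc (G.mem_flowSet_iff.1 hf).2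
    rw [sub_dotProduct, h0, sub_zero]
    exact G.isInt_dot hχint (G.mem_flowSet_iff.1 hf).1
  · have h0 : ξ ⬝ᵥ f = 0 := G.cut_flow_orth hξKc (G.mem_flowSet_iff.1 hf).2
    rw [sub_dotProduct, h0, sub_zero]
    exact odd_dot_parity hχ (G.mem_flowSet_iff.1 hf).1

lemma lift_cut_char {μ χ : Fin G.nE → ℚ} (hχ : ∀ i, ∃ m : ℤ, χ i = 2*m+1)
    (hμKf : μ ∈ G.Kf) (hl : χ - μ ∈ G.Kc) :
    χ - μ ∈ CharOf (1 : Matrix (Fin G.nE) (Fin G.nE) ℤ) G.cutSet := by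
  have hχint : ∀ i, isInt (χ i) := fun i => by
    obtain ⟨m, hm⟩ := hχ i; exact ⟨2*m+1, by rw [hm]; push_cast; ring⟩
  refine G.mem_char_cut.2 ⟨hl, fun c hc => ?_, fun c hc => ?_⟩
  · have h0 : μ ⬝ᵥ c = 0 := by
      rw [dotProduct_comm]
      exact G.cut_flow_orth (G.mem_cutSet_iff.1 hc).2 hμKf
    rw [sub_dotProduct, h0, sub_zero]
    exact G.isInt_dot hχint (G.mem_cutSet_iff.1 hc).1
  · have h0 : μ ⬝ᵥ c = 0 := by
      rw [dotProduct_comm]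
      exact G.cut_flow_orth (G.mem_cutSet_iff.1 hc).2 hμKf
    rw [sub_dotProduct, h0, sub_zero]
    exact odd_dot_parity hχ (G.mem_cutSet_iff.1 hc).1

lemma class_corr {ξ ξ' χ χ' : Fin G.nE → ℚ} (hξ : ξ ∈ G.Kc) (hξ' : ξ' ∈ G.Kc)
    (hχ : ∀ i, ∃ m : ℤ, χ i = 2*m+1) (hχ' : ∀ i, ∃ m : ℤ, χ' i = 2*m+1)
    (hl : χ - ξ ∈ G.Kf) (hl' : χ' - ξ' ∈ G.Kf) :
    SameClass G.cutSet ξ ξ' ↔ SameClass G.flowSet (χ - ξ) (χ' - ξ') := by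
  constructor
  · rintro ⟨c, hc, hcc⟩
    have hw : (χ' - ξ') - (χ - ξ) ∈ G.Kf := Submodule.sub_mem _ hl' hl
    have hweven : ∀ i, evenQ (((χ' - ξ') - (χ - ξ)) i) := by
      intro i
      obtain ⟨m, hm⟩ := hχ i
      obtain ⟨m', hm'⟩ := hχ' i
      obtain ⟨k, hk⟩ := (G.mem_cutSet_iff.1 hc).1 i
      have hξi : ξ' i = ξ i + 2 * c i := by rw [hcc]; simp [Pi.add_apply, Pi.smul_apply]
      refine ⟨m' - m - k, ?_⟩
      simp only [Pi.sub_apply]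
      rw [hξi, hm, hm', hk]
      push_cast
      ring
    obtain ⟨f, hf, hfeq⟩ := G.half_mem_flowSet hw hweven
    exact ⟨f, hf, by rw [← hfeq]; abel⟩
  · rintro ⟨f, hf, hff⟩
    have hv : ξ' - ξ ∈ G.Kc := Submodule.sub_mem _ hξ' hξ
    have hveven : ∀ i, evenQ ((ξ' - ξ) i) := by
      intro i
      obtain ⟨m, hm⟩ := hχ i
      obtain ⟨m', hm'⟩ := hχ' i
      obtain ⟨k, hk⟩ := (G.mem_flowSet_iff.1 hf).1 i
      have : (χ' - ξ') i = (χ - ξ) i + 2 * f i := by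
        rw [hff]; simp [Pi.add_apply, Pi.smul_apply]
      simp only [Pi.sub_apply] at this ⊢
      refine ⟨m' - m - k, ?_⟩
      rw [hm, hm', hk] at this
      push_cast at this ⊢
      linarith
    obtain ⟨c, hc, hceq⟩ := G.half_mem_cutSet hv hveven
    exact ⟨c, hc, by rw [← hceq]; abel⟩

lemma sameClass_cut_refl (ξ : Fin G.nE → ℚ) : SameClass G.cutSet ξ ξ :=
  ⟨0, G.cutSet_zero, by simp⟩

lemma sameClass_flow_refl (ξ : Fin G.nE → ℚ) : SameClass G.flowSet ξ ξ :=
  ⟨0, G.flowSet_zero, by simp⟩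

end MultiGraph

end LatticeLevel

end Aux

/-- the restrictions `Short(C₁(G;ℤ)) → Short(𝒞(G)), Short(ℱ(G))`
surject, and restriction induces an isomorphism `(C(𝒞(G)), d) → (C(ℱ(G)), −d)`
characterized by `φ([r_𝒞 χ]) = [r_ℱ χ]` for `χ ∈ Char(C₁(G;ℤ))`. -/
theorem stmt_19 (G : MultiGraph) :
    (∀ ξ ∈ ShortOf (1 : Matrix (Fin G.nE) (Fin G.nE) ℤ) G.cutSet,
      ∃ χ ∈ ShortOf (1 : Matrix (Fin G.nE) (Fin G.nE) ℤ) (intVecs (Fin G.nE)),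
        ∀ y ∈ G.cutSet, qform (1 : Matrix (Fin G.nE) (Fin G.nE) ℤ) χ y
          = qform (1 : Matrix (Fin G.nE) (Fin G.nE) ℤ) ξ y) ∧
    (∀ ξ ∈ ShortOf (1 : Matrix (Fin G.nE) (Fin G.nE) ℤ) G.flowSet,
      ∃ χ ∈ ShortOf (1 : Matrix (Fin G.nE) (Fin G.nE) ℤ) (intVecs (Fin G.nE)),
        ∀ y ∈ G.flowSet, qform (1 : Matrix (Fin G.nE) (Fin G.nE) ℤ) χ y
          = qform (1 : Matrix (Fin G.nE) (Fin G.nE) ℤ) ξ y) ∧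
    ∃ (Φ : (Fin G.nE → ℚ) → (Fin G.nE → ℚ))
      (ψ : disc (1 : Matrix (Fin G.nE) (Fin G.nE) ℤ) G.cutSet ≃+
           disc (1 : Matrix (Fin G.nE) (Fin G.nE) ℤ) G.flowSet),
      TorsorMapIso (1 : Matrix (Fin G.nE) (Fin G.nE) ℤ) G.cutSet
        (1 : Matrix (Fin G.nE) (Fin G.nE) ℤ) G.flowSet Φ ψ ∧
      DCompat (1 : Matrix (Fin G.nE) (Fin G.nE) ℤ) G.cutSet
        (1 : Matrix (Fin G.nE) (Fin G.nE) ℤ) G.flowSet (-1) Φ ∧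
      (∀ χ ∈ CharOf (1 : Matrix (Fin G.nE) (Fin G.nE) ℤ) (intVecs (Fin G.nE)),
        ∀ ξ₁ ∈ CharOf (1 : Matrix (Fin G.nE) (Fin G.nE) ℤ) G.cutSet,
        ∀ ξ₂ ∈ CharOf (1 : Matrix (Fin G.nE) (Fin G.nE) ℤ) G.flowSet,
        (∀ y ∈ G.cutSet, qform (1 : Matrix (Fin G.nE) (Fin G.nE) ℤ) χ y
          = qform (1 : Matrix (Fin G.nE) (Fin G.nE) ℤ) ξ₁ y) →
        (∀ y ∈ G.flowSet, qform (1 : Matrix (Fin G.nE) (Fin G.nE) ℤ) χ y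
          = qform (1 : Matrix (Fin G.nE) (Fin G.nE) ℤ) ξ₂ y) →
        SameClass G.flowSet (Φ ξ₁) ξ₂) := by
  classical
  have hrk : (rkOf G.cutSet : ℚ) + (rkOf G.flowSet : ℚ) = (G.nE : ℚ) := by
    exact_mod_cast G.rkOf_sum
  refine ⟨?_, ?_, ?_⟩
  · -- short covectors of the cut lattice lift
    intro ξ hξ
    obtain ⟨ε, hpm, hlift⟩ := G.short_cut_lift hξ
    refine ⟨ε, ⟨mem_char_intVecs.2 (G.pm_one_odd hpm), fun χ' hχ' _ => ?_⟩, fun y hy => ?_⟩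
    · rw [qform_one, qform_one, G.pm_one_norm hpm]
      exact G.odd_norm_ge (mem_char_intVecs.1 hχ')
    · rw [qform_one, qform_one]
      exact G.cut_restrict_eq hlift hy
  · -- short covectors of the flow lattice lift
    intro ξ hξ
    obtain ⟨ε, hpm, hlift⟩ := G.short_flow_lift hξ
    refine ⟨ε, ⟨mem_char_intVecs.2 (G.pm_one_odd hpm), fun χ' hχ' _ => ?_⟩, fun y hy => ?_⟩
    · rw [qform_one, qform_one, G.pm_one_norm hpm]
      exact G.odd_norm_ge (mem_char_intVecs.1 hχ')
    · rw [qform_one, qform_one]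
      exact G.flow_restrict_eq hlift hy
  · -- the torsor isomorphism
    refine ⟨G.PhiMap, G.psiEquiv, ⟨?_, ?_, ?_, ?_⟩, ?_, ?_⟩
    · -- Φ maps Char to Char
      intro ξ hξ
      obtain ⟨χ, hodd, hKf, hPhi⟩ := G.PhiMap_spec hξ
      rw [hPhi]
      exact G.lift_flow_char hodd (G.mem_char_cut.1 hξ).1 hKf
    · -- Φ respects classes
      intro ξ hξ ξ' hξ'
      obtain ⟨χ, hodd, hKf, hPhi⟩ := G.PhiMap_spec hξ
      obtain ⟨χ', hodd', hKf', hPhi'⟩ := G.PhiMap_spec hξ'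
      rw [hPhi, hPhi']
      exact G.class_corr (G.mem_char_cut.1 hξ).1 (G.mem_char_cut.1 hξ').1 hodd hodd' hKf hKf'
    · -- Φ is surjective up to classes
      intro μ hμ
      obtain ⟨χ, hodd, hKc⟩ := G.exists_odd_lift_flow hμ
      have hμKf : μ ∈ G.Kf := (G.mem_char_flow.1 hμ).1
      have hξchar : χ - μ ∈ CharOf (1 : Matrix (Fin G.nE) (Fin G.nE) ℤ) G.cutSet :=
        G.lift_cut_char hodd hμKf hKc
      refine ⟨χ - μ, hξchar, ?_⟩
      obtain ⟨χ₂, hodd₂, hKf₂, hPhi⟩ := G.PhiMap_spec hξchar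
      rw [hPhi]
      have hμeq : χ - (χ - μ) = μ := by abel
      have hμlift : χ - (χ - μ) ∈ G.Kf := by rw [hμeq]; exact hμKf
      have := (G.class_corr hKc hKc hodd₂ hodd hKf₂ hμlift).1 (G.sameClass_cut_refl (χ - μ))
      rwa [hμeq] at this
    · -- the glue map on discriminant groups
      intro ξ hξ ξ' hξ' x y hx hy hxx hyy
      obtain ⟨χ, hodd, hKf, hPhi⟩ := G.PhiMap_spec hξ
      obtain ⟨χ', hodd', hKf', hPhi'⟩ := G.PhiMap_spec hξ'
      rw [hPhi, hPhi'] at hyy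
      have hsum : χ' - χ = (2:ℚ) • x + (2:ℚ) • y := by
        calc χ' - χ = (χ' - (ξ + (2:ℚ) • x)) - (χ - ξ) + (2:ℚ) • x := by abel
        _ = ((χ - ξ) + (2:ℚ) • y) - (χ - ξ) + (2:ℚ) • x := by rw [← hxx, hyy]
        _ = (2:ℚ) • x + (2:ℚ) • y := by abel
      rw [G.psiEquiv_dmk]
      apply G.dmk_eq_flow
      -- (cutLiftV x - x) - y ∈ flowSet
      obtain ⟨hz1, hz2, hz3⟩ := G.cutLiftV_spec (G.mem_dual_cut.1 hx).2
      refine G.mem_flowSet_iff.2 ⟨fun i => ?_, ?_⟩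
      · obtain ⟨m, hm⟩ := hodd i
        obtain ⟨m', hm'⟩ := hodd' i
        obtain ⟨k, hk⟩ := hz1 i
        have hxyi : (2:ℚ) * (x i + y i) = χ' i - χ i := by
          have := congrFun hsum i
          simp only [Pi.sub_apply, Pi.add_apply, Pi.smul_apply, smul_eq_mul] at this
          linarith
        refine ⟨k - (m' - m), ?_⟩
        simp only [Pi.sub_apply]
        rw [hm, hm'] at hxyi
        push_cast
        rw [hk]
        linarith
      · exact Submodule.sub_mem _ hz3 (G.mem_dual_flow.1 hy).1
    · -- DCompat with ε = -1
      intro ξ hξ q hq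
      obtain ⟨⟨ξ₁, hξ₁char, hsame, hqval⟩, hlb⟩ := hq
      rw [qform_one] at hqval
      have hξ₁Kc : ξ₁ ∈ G.Kc := (G.mem_char_cut.1 hξ₁char).1
      have hξKc : ξ ∈ G.Kc := (G.mem_char_cut.1 hξ).1
      have hξ₁short : ξ₁ ∈ ShortOf (1 : Matrix (Fin G.nE) (Fin G.nE) ℤ) G.cutSet := by
        refine ⟨hξ₁char, fun χ' hχ' hsc => ?_⟩
        have hmem : (qform (1 : Matrix (Fin G.nE) (Fin G.nE) ℤ) χ' χ' -
            (rkOf G.cutSet : ℚ)) / 4 ∈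
            {t | ∃ χ'' ∈ CharOf (1 : Matrix (Fin G.nE) (Fin G.nE) ℤ) G.cutSet,
              SameClass G.cutSet ξ χ'' ∧
              t = (qform (1 : Matrix (Fin G.nE) (Fin G.nE) ℤ) χ'' χ'' - (rkOf G.cutSet : ℚ)) / 4} :=
          ⟨χ', hχ', G.sameClass_cut_trans hsame hsc, rfl⟩
        have := hlb hmem
        rw [qform_one, qform_one] at *
        linarith
      obtain ⟨ε, hpm, hlift⟩ := G.short_cut_lift hξ₁short
      have hn : ε ⬝ᵥ ε = (G.nE : ℚ) := G.pm_one_norm hpm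
      have hdecomp : (ξ₁ + (ε - ξ₁)) ⬝ᵥ (ξ₁ + (ε - ξ₁)) =
          ξ₁ ⬝ᵥ ξ₁ + (ε - ξ₁) ⬝ᵥ (ε - ξ₁) := G.dot_decomp hξ₁Kc hlift
      rw [show ξ₁ + (ε - ξ₁) = ε from by abel] at hdecomp
      have hμ₁char : ε - ξ₁ ∈ CharOf (1 : Matrix (Fin G.nE) (Fin G.nE) ℤ) G.flowSet :=
        G.lift_flow_char (G.pm_one_odd hpm) hξ₁Kc hlift
      obtain ⟨χ₀, hodd₀, hKf₀, hPhi₀⟩ := G.PhiMap_spec hξ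
      have hsameμ : SameClass G.flowSet (G.PhiMap ξ) (ε - ξ₁) := by
        rw [hPhi₀]
        exact (G.class_corr hξKc hξ₁Kc hodd₀ (G.pm_one_odd hpm) hKf₀ hlift).1 hsame
      constructor
      · refine ⟨ε - ξ₁, hμ₁char, hsameμ, ?_⟩
        rw [qform_one]
        have := hrk
        linarith
      · intro t ht
        obtain ⟨μ, hμchar, hμsame, rfl⟩ := ht
        rw [qform_one]
        obtain ⟨f, hf, hfe⟩ := G.sameClass_flow_trans (G.sameClass_flow_symm hsameμ) hμsame
        have hε'odd : ∀ i, ∃ m : ℤ, (ε + (2:ℚ) • f) i = 2*m+1 := by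
          intro i
          obtain ⟨a, ha⟩ := G.pm_one_odd hpm i
          obtain ⟨k, hk⟩ := (G.mem_flowSet_iff.1 hf).1 i
          exact ⟨a + k, by
            simp only [Pi.add_apply, Pi.smul_apply, smul_eq_mul]
            rw [ha, hk]; push_cast; ring⟩
        have hge : (G.nE : ℚ) ≤ (ε + (2:ℚ) • f) ⬝ᵥ (ε + (2:ℚ) • f) := G.odd_norm_ge hε'odd
        have hKfμ : (ε - ξ₁) + (2:ℚ) • f ∈ G.Kf :=
          Submodule.add_mem _ hlift (Submodule.smul_mem _ _ (G.mem_flowSet_iff.1 hf).2)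
        have hdec2 : (ξ₁ + ((ε - ξ₁) + (2:ℚ) • f)) ⬝ᵥ (ξ₁ + ((ε - ξ₁) + (2:ℚ) • f)) =
            ξ₁ ⬝ᵥ ξ₁ + ((ε - ξ₁) + (2:ℚ) • f) ⬝ᵥ ((ε - ξ₁) + (2:ℚ) • f) :=
          G.dot_decomp hξ₁Kc hKfμ
        rw [show ξ₁ + ((ε - ξ₁) + (2:ℚ) • f) = ε + (2:ℚ) • f from by abel] at hdec2
        rw [← hfe] at hdec2
        have := hrk
        linarith
    · -- characterization
      intro χ hχ ξ₁ hξ₁ ξ₂ hξ₂ hres₁ hres₂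
      have hχodd := mem_char_intVecs.1 hχ
      have hξ₁Kc : ξ₁ ∈ G.Kc := (G.mem_char_cut.1 hξ₁).1
      have hξ₂Kf : ξ₂ ∈ G.Kf := (G.mem_char_flow.1 hξ₂).1
      have hl₁ : χ - ξ₁ ∈ G.Kf := by
        apply G.mem_Kf_of_orth_cut
        intro c hc
        have := hres₁ c hc
        rw [qform_one, qform_one] at this
        rw [sub_dotProduct, this, sub_self]
      have hl₂ : χ - ξ₂ ∈ G.Kc := by
        apply G.mem_Kc_of_orth_flow
        intro f hf
        have := hres₂ f hf
        rw [qform_one, qform_one] at this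
        rw [sub_dotProduct, this, sub_self]
      have hzero : (χ - ξ₂) - ξ₁ = 0 := by
        apply G.Kc_inf_Kf_zero
        · exact Submodule.sub_mem _ hl₂ hξ₁Kc
        · rw [show (χ - ξ₂) - ξ₁ = (χ - ξ₁) - ξ₂ from by abel]
          exact Submodule.sub_mem _ hl₁ hξ₂Kf
      have hξ₂eq : ξ₂ = χ - ξ₁ := by
        have := sub_eq_zero.1 hzero
        rw [← this]; abel
      obtain ⟨χ₂, hodd₂, hKf₂, hPhi⟩ := G.PhiMap_spec hξ₁
      rw [hPhi, hξ₂eq]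
      exact (G.class_corr hξ₁Kc hξ₁Kc hodd₂ hχodd hKf₂ hl₁).1 (G.sameClass_cut_refl ξ₁)

end Greene
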